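/- arXiv:1412.5856 — 4 statements merged into one kernel-verified Lean document; each statement's English description precedes it below -/
import Mathlib

section
/- Let q be a Q-matrix on ℕ and let P be a substochastic transition function satisfying the backward integral equation for q. Then for every subset A ⊆ ℕ and every state i ∉ A, one has lim_{t→0⁺} (1/t) ∑_{j∈A} P t i j = ∑_{j∈A} q i j. -/
open scoped BigOperators
open Filter Topology

/-- Row `i` of `q` with the diagonal entry replaced by `0`
(used to form sums over the off-diagonal entries). -/
noncomputable def offDiag (q : ℕ → ℕ → ℝ) (i j : ℕ) : ℝ :=
  if j = i then 0 else q i j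

/-- `q` is a (totally stable) Q-matrix on `ℕ`: nonnegative off-diagonal entries,
nonpositive diagonal, and each row is summable off the diagonal with
`∑_{j ≠ i} q i j ≤ qᵢ := -q i i`. -/
def IsQMatrix (q : ℕ → ℕ → ℝ) : Prop :=
  (∀ i j, i ≠ j → 0 ≤ q i j) ∧
  (∀ i, q i i ≤ 0) ∧
  (∀ i, Summable (fun j => offDiag q i j)) ∧
  (∀ i, (∑' j, offDiag q i j) ≤ - q i i)

/-- A Q-matrix is conservative if each row sums to `0`:
`∑_{j ≠ i} q i j = qᵢ = -q i i`. -/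
def IsConservative (q : ℕ → ℕ → ℝ) : Prop :=
  ∀ i, (∑' j, offDiag q i j) = - q i i

/-- A Q-matrix is bounded if `sup_i qᵢ < ∞`. -/
def IsBoundedQ (q : ℕ → ℕ → ℝ) : Prop :=
  ∃ C : ℝ, ∀ i, - q i i ≤ C

/-- A substochastic transition function on `[0,∞)` (parametrized by `t : ℝ`,
with all conditions imposed for `t ≥ 0`). -/
def IsTransitionFunction (P : ℝ → ℕ → ℕ → ℝ) : Prop :=
  (∀ t i j, 0 ≤ t → 0 ≤ P t i j) ∧
  (∀ t i, 0 ≤ t → Summable (fun j => P t i j)) ∧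
  (∀ t i, 0 ≤ t → (∑' j, P t i j) ≤ 1) ∧
  (∀ i j, P 0 i j = if i = j then 1 else 0) ∧
  (∀ t s i j, 0 ≤ t → 0 ≤ s → P (t + s) i j = ∑' k, P t i k * P s k j)

/-- `P` satisfies the backward integral equation for the Q-matrix `q`:
`P t i j = δ_{ij} e^{-qᵢ t} + ∫_0^t e^{-qᵢ (t-s)} ∑_{k ≠ i} q i k P s k j ds`
(here `-qᵢ = q i i`). -/
def BackwardEq (q : ℕ → ℕ → ℝ) (P : ℝ → ℕ → ℕ → ℝ) : Prop :=
  ∀ t i j, 0 ≤ t →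
    P t i j = (if i = j then 1 else 0) * Real.exp (q i i * t) +
      ∫ s in (0:ℝ)..t,
        Real.exp (q i i * (t - s)) * (∑' k, if k = i then 0 else q i k * P s k j)

/-- `P` is the minimal Q-process for `q`: a substochastic transition function
satisfying the backward integral equation for `q`, which is pointwise below any
other such transition function. -/
def IsMinimalQProcess (q : ℕ → ℕ → ℝ) (P : ℝ → ℕ → ℕ → ℝ) : Prop :=
  IsTransitionFunction P ∧ BackwardEq q P ∧
  ∀ P', IsTransitionFunction P' → BackwardEq q P' →
    ∀ t i j, 0 ≤ t → P t i j ≤ P' t i j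

/-- `q` is regular (`IsRegularQ` to avoid a name clash with Mathlib): conservative, and the minimal Q-process is honest (stochastic). -/
def IsRegularQ (q : ℕ → ℕ → ℝ) : Prop :=
  IsConservative q ∧
  ∀ P, IsMinimalQProcess q P → ∀ t, 0 ≤ t → ∀ i, (∑' j, P t i j) = 1

/-- The tail sum `∑_{j ≥ k} f j`. -/
noncomputable def tailSum (f : ℕ → ℝ) (k : ℕ) : ℝ :=
  ∑' j, if k ≤ j then f j else 0

/-- Condition (1.1): stochastic comparability of `P1` and `P2`. -/
def Cond11 (P1 P2 : ℝ → ℕ → ℕ → ℝ) : Prop :=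
  ∀ t, 0 ≤ t → ∀ k i m, i ≤ m → tailSum (P1 t i) k ≤ tailSum (P2 t m) k

/-- Condition (1.2) for the Q-matrices `q1`, `q2`. -/
def Cond12 (q1 q2 : ℕ → ℕ → ℝ) : Prop :=
  ∀ i m, i ≤ m → ∀ k, (k ≤ i ∨ m + 1 ≤ k) →
    tailSum (q1 i) k ≤ tailSum (q2 m) k

/-- Condition (1.3) for the Q-matrices `q1`, `q2` (the conservative reduction
of (1.2)). -/
def Cond13 (q1 q2 : ℕ → ℕ → ℝ) : Prop :=
  ∀ i m, i ≤ m →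
    (∀ k, m + 1 ≤ k → tailSum (q1 i) k ≤ tailSum (q2 m) k) ∧
    (∀ k, k + 1 ≤ i →
      (∑ j ∈ Finset.range (k + 1), q2 m j) ≤ ∑ j ∈ Finset.range (k + 1), q1 i j)

open MeasureTheory intervalIntegral Set


lemma avg_lemma (c : ℝ) (g : ℝ → ℝ) (hg : ContinuousOn g (Set.Ici 0)) :
    Tendsto (fun t : ℝ => (1 / t) * ∫ s in (0:ℝ)..t, Real.exp (c * (t - s)) * g s)
      (𝓝[>] 0) (𝓝 (g 0)) := by
  set f : ℝ → ℝ := fun x => Real.exp (-c * x) * g x with hf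
  have hfc : ContinuousOn f (Set.Ici 0) :=
    ((Real.continuous_exp.comp (continuous_const.mul continuous_id)).continuousOn).mul hg
  have hG : HasDerivWithinAt (fun u => ∫ x in (0:ℝ)..u, f x) (f 0) (Set.Ici 0) 0 := by
    refine integral_hasDerivWithinAt_right ?_ ?_ ?_
    · exact (hfc.mono (by simp)).intervalIntegrable
    · exact ⟨Set.Ioi 0, self_mem_nhdsWithin,
        (hfc.mono Set.Ioi_subset_Ici_self).aestronglyMeasurable measurableSet_Ioi⟩
    · exact (hfc 0 Set.self_mem_Ici).mono Set.Ioi_subset_Ici_self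
  have hslope : Tendsto (fun t : ℝ => (1 / t) * ∫ x in (0:ℝ)..t, f x) (𝓝[>] 0) (𝓝 (g 0)) := by
    have := hasDerivWithinAt_iff_tendsto_slope.1 hG
    rw [Set.Ici_sdiff_left] at this
    have hf0 : f 0 = g 0 := by simp [hf]
    rw [hf0] at this
    refine this.congr (fun t => ?_)
    simp [slope_def_field, div_eq_inv_mul, one_div]
  have hexp : Tendsto (fun t : ℝ => Real.exp (c * t)) (𝓝[>] 0) (𝓝 1) := by
    have : Continuous fun t : ℝ => Real.exp (c * t) :=
      Real.continuous_exp.comp (continuous_const.mul continuous_id)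
    simpa using (this.tendsto 0).mono_left nhdsWithin_le_nhds
  have key : ∀ t : ℝ, (1 / t) * ∫ s in (0:ℝ)..t, Real.exp (c * (t - s)) * g s
      = Real.exp (c * t) * ((1 / t) * ∫ x in (0:ℝ)..t, f x) := by
    intro t
    have : ∀ s : ℝ, Real.exp (c * (t - s)) * g s = Real.exp (c * t) * f s := by
      intro s
      rw [hf]
      rw [show c * (t - s) = c * t + -c * s by ring, Real.exp_add, mul_assoc]
    rw [intervalIntegral.integral_congr (fun s _ => this s), intervalIntegral.integral_const_mul]
    ring
  simp only [key]
  simpa using hexp.mul hslope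

section Basic
variable {q : ℕ → ℕ → ℝ} {P : ℝ → ℕ → ℕ → ℝ}

lemma P_le_one (hP : IsTransitionFunction P) {t : ℝ} (ht : 0 ≤ t) (i j : ℕ) :
    P t i j ≤ 1 :=
  le_trans (Summable.le_tsum (hP.2.1 t i ht) j (fun k _ => hP.1 t i k ht)) (hP.2.2.1 t i ht)

lemma P_diag_ge (hq : IsQMatrix q) (hP : IsTransitionFunction P) (hPq : BackwardEq q P)
    {t : ℝ} (ht : 0 ≤ t) (i : ℕ) : Real.exp (q i i * t) ≤ P t i i := by
  have h := hPq t i i ht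
  rw [if_pos rfl, one_mul] at h
  rw [h]
  have : 0 ≤ ∫ s in (0:ℝ)..t,
      Real.exp (q i i * (t - s)) * (∑' k, if k = i then 0 else q i k * P s k i) := by
    apply intervalIntegral.integral_nonneg ht
    intro u hu
    apply mul_nonneg (Real.exp_nonneg _)
    apply tsum_nonneg
    intro k
    by_cases hk : k = i
    · simp [hk]
    · simp only [hk, if_false]
      exact mul_nonneg (hq.1 i k (Ne.symm hk)) (hP.1 u k i hu.1)
  linarith

lemma P_increment (hP : IsTransitionFunction P) {t h : ℝ} (ht : 0 ≤ t) (hh : 0 ≤ h)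
    (k j : ℕ) : |P (t + h) k j - P t k j| ≤ 1 - P h k k := by
  have hCK : P (h + t) k j = ∑' m, P h k m * P t m j := hP.2.2.2.2 h t k j hh ht
  rw [add_comm t h]
  have hsum : Summable (fun m => P h k m * P t m j) := by
    apply Summable.of_nonneg_of_le (fun m => mul_nonneg (hP.1 h k m hh) (hP.1 t m j ht))
      (fun m => mul_le_of_le_one_right (hP.1 h k m hh) (P_le_one hP ht m j)) (hP.2.1 h k hh)
  have hsplit := Summable.tsum_eq_add_tsum_ite hsum k
  have hsplit2 := Summable.tsum_eq_add_tsum_ite (hP.2.1 h k hh) k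
  have htail : (∑' m, if m = k then 0 else P h k m * P t m j)
      ≤ ∑' m, if m = k then 0 else P h k m := by
    apply Summable.tsum_le_tsum
    · intro m
      by_cases hm : m = k
      · simp [hm]
      · simp only [hm, if_false]
        exact mul_le_of_le_one_right (hP.1 h k m hh) (P_le_one hP ht m j)
    · apply Summable.of_nonneg_of_le (fun m => ?_) (fun m => ?_) (hP.2.1 h k hh)
      · by_cases hm : m = k
        · simp [hm]
        · simp only [hm, if_false]; exact mul_nonneg (hP.1 h k m hh) (hP.1 t m j ht)
      · by_cases hm : m = k
        · simp [hm, hP.1 h k k hh]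
        · simp only [hm, if_false]
          exact mul_le_of_le_one_right (hP.1 h k m hh) (P_le_one hP ht m j)
    · apply Summable.of_nonneg_of_le (fun m => ?_) (fun m => ?_) (hP.2.1 h k hh)
      · by_cases hm : m = k
        · simp [hm]
        · simp [hm, hP.1 h k m hh]
      · by_cases hm : m = k
        · simp [hm, hP.1 h k k hh]
        · simp [hm]
  have htail2 : (∑' m, if m = k then 0 else P h k m) ≤ 1 - P h k k := by
    have : (∑' m, P h k m) ≤ 1 := hP.2.2.1 h k hh
    linarith [hsplit2]
  rw [abs_le]
  constructor
  · have hlow : P h k k * P t k j ≤ ∑' m, P h k m * P t m j := by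
      apply Summable.le_tsum hsum k
      intro m _
      exact mul_nonneg (hP.1 h k m hh) (hP.1 t m j ht)
    have h1 : P h k k ≤ 1 := P_le_one hP hh k k
    have h2 : 0 ≤ P t k j := hP.1 t k j ht
    have h3 : P t k j ≤ 1 := P_le_one hP ht k j
    nlinarith [hCK, hlow]
  · have hup : (∑' m, P h k m * P t m j) ≤ P h k k * P t k j + (1 - P h k k) := by
      rw [hsplit]
      have := le_trans htail htail2
      linarith
    have h2 : 0 ≤ P t k j := hP.1 t k j ht
    have h1 : P h k k ≤ 1 := P_le_one hP hh k k
    nlinarith [hCK, hup]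

lemma P_dist (hq : IsQMatrix q) (hP : IsTransitionFunction P) (hPq : BackwardEq q P)
    {t₁ t₂ : ℝ} (h1 : 0 ≤ t₁) (h2 : 0 ≤ t₂) (k j : ℕ) :
    |P t₂ k j - P t₁ k j| ≤ 1 - Real.exp (q k k * |t₂ - t₁|) := by
  rcases le_total t₁ t₂ with h | h
  · have := P_increment hP h1 (by linarith : (0:ℝ) ≤ t₂ - t₁) k j
    rw [add_sub_cancel] at this
    have hd := P_diag_ge hq hP hPq (by linarith : (0:ℝ) ≤ t₂ - t₁) k
    rw [abs_of_nonneg (by linarith : (0:ℝ) ≤ t₂ - t₁)]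
    linarith
  · have := P_increment hP h2 (by linarith : (0:ℝ) ≤ t₁ - t₂) k j
    rw [add_sub_cancel] at this
    have hd := P_diag_ge hq hP hPq (by linarith : (0:ℝ) ≤ t₁ - t₂) k
    rw [abs_sub_comm, show |t₂ - t₁| = t₁ - t₂ by rw [abs_sub_comm]; exact abs_of_nonneg (by linarith)]
    linarith

lemma P_continuousOn (hq : IsQMatrix q) (hP : IsTransitionFunction P) (hPq : BackwardEq q P)
    (k j : ℕ) : ContinuousOn (fun t => P t k j) (Set.Ici 0) := by
  intro t₀ ht₀
  rw [ContinuousWithinAt, Metric.tendsto_nhdsWithin_nhds]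
  intro ε hε
  have hexp : Tendsto (fun r : ℝ => 1 - Real.exp (q k k * r)) (𝓝 0) (𝓝 0) := by
    have : Continuous fun r : ℝ => 1 - Real.exp (q k k * r) :=
      continuous_const.sub (Real.continuous_exp.comp (continuous_const.mul continuous_id))
    simpa using this.tendsto 0
  rw [Metric.tendsto_nhds_nhds] at hexp
  obtain ⟨δ, hδ, hδ'⟩ := hexp ε hε
  refine ⟨δ, hδ, fun x hx hxd => ?_⟩
  have hb := P_dist hq hP hPq ht₀ hx k j
  have hd2 : dist (|x - t₀|) (0:ℝ) < δ := by
    rw [Real.dist_eq, sub_zero, abs_abs]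
    rw [Real.dist_eq] at hxd
    exact hxd
  have := hδ' hd2
  rw [Real.dist_eq, sub_zero] at this
  rw [Real.dist_eq]
  calc |P x k j - P t₀ k j| ≤ 1 - Real.exp (q k k * |x - t₀|) := hb
    _ ≤ |1 - Real.exp (q k k * |x - t₀|)| := le_abs_self _
    _ < ε := this

/-- The integrand in the backward equation. -/
noncomputable def gFun (q : ℕ → ℕ → ℝ) (P : ℝ → ℕ → ℕ → ℝ) (i j : ℕ) (s : ℝ) : ℝ :=
  ∑' k, if k = i then 0 else q i k * P s k j

lemma gFun_eq (i j : ℕ) (s : ℝ) :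
    gFun q P i j s = ∑' k, _root_.offDiag q i k * P s k j := by
  unfold gFun _root_.offDiag
  congr 1; funext k
  by_cases hk : k = i <;> simp [hk]

lemma _root_.offDiag_nonneg (hq : IsQMatrix q) (i k : ℕ) : 0 ≤ _root_.offDiag q i k := by
  unfold _root_.offDiag
  by_cases hk : k = i
  · simp [hk]
  · simp only [hk, if_false]; exact hq.1 i k (Ne.symm hk)

lemma gFun_continuousOn (hq : IsQMatrix q) (hP : IsTransitionFunction P)
    (hPq : BackwardEq q P) (i j : ℕ) :
    ContinuousOn (gFun q P i j) (Set.Ici 0) := by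
  have hrw : gFun q P i j = fun s => ∑' k, _root_.offDiag q i k * P s k j :=
    funext (gFun_eq i j)
  rw [hrw]
  apply continuousOn_tsum (u := fun k => _root_.offDiag q i k)
  · intro k
    exact continuousOn_const.mul (P_continuousOn hq hP hPq k j)
  · exact hq.2.2.1 i
  · intro k s hs
    rw [Real.norm_eq_abs, abs_of_nonneg (mul_nonneg (_root_.offDiag_nonneg hq i k) (hP.1 s k j hs))]
    exact mul_le_of_le_one_right (_root_.offDiag_nonneg hq i k) (P_le_one hP hs k j)

lemma gFun_summand_summable (hq : IsQMatrix q) (hP : IsTransitionFunction P)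
    {s : ℝ} (hs : 0 ≤ s) (i j : ℕ) :
    Summable (fun k => _root_.offDiag q i k * P s k j) := by
  apply Summable.of_nonneg_of_le
    (fun k => mul_nonneg (_root_.offDiag_nonneg hq i k) (hP.1 s k j hs))
    (fun k => mul_le_of_le_one_right (_root_.offDiag_nonneg hq i k) (P_le_one hP hs k j))
    (hq.2.2.1 i)

lemma gFun_zero (hP : IsTransitionFunction P) (i j : ℕ) :
    gFun q P i j 0 = if j = i then 0 else q i j := by
  unfold gFun
  rw [tsum_eq_single j]
  · rw [hP.2.2.2.1 j j, if_pos rfl]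
    by_cases hj : j = i <;> simp [hj]
  · intro k hk
    by_cases hki : k = i
    · simp [hki]
    · simp only [hki, if_false]
      rw [hP.2.2.2.1 k j, if_neg hk, mul_zero]

lemma integrand_continuousOn (hq : IsQMatrix q) (hP : IsTransitionFunction P)
    (hPq : BackwardEq q P) (i j : ℕ) {t : ℝ} (ht : 0 ≤ t) :
    IntervalIntegrable (fun s => Real.exp (q i i * (t - s)) * gFun q P i j s)
      MeasureTheory.volume 0 t := by
  apply ContinuousOn.intervalIntegrable
  rw [Set.uIcc_of_le ht]
  apply ContinuousOn.mul
  · exact (Real.continuous_exp.comp (continuous_const.mul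
      (continuous_const.sub continuous_id))).continuousOn
  · exact (gFun_continuousOn hq hP hPq i j).mono (fun x hx => hx.1)

lemma sum_backwardEq (hq : IsQMatrix q) (hP : IsTransitionFunction P)
    (hPq : BackwardEq q P) {F : Finset ℕ} {i : ℕ} (hi : i ∉ F) {t : ℝ} (ht : 0 ≤ t) :
    ∑ j ∈ F, P t i j =
      ∫ s in (0:ℝ)..t, Real.exp (q i i * (t - s)) * ∑ j ∈ F, gFun q P i j s := by
  have h1 : ∀ j ∈ F, P t i j = ∫ s in (0:ℝ)..t, Real.exp (q i i * (t - s)) * gFun q P i j s := by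
    intro j hj
    have h := hPq t i j ht
    have hij : i ≠ j := fun h' => hi (h' ▸ hj)
    rw [if_neg hij, zero_mul, zero_add] at h
    exact h
  rw [Finset.sum_congr rfl h1, ← intervalIntegral.integral_finset_sum
    (fun j _ => integrand_continuousOn hq hP hPq i j ht)]
  congr 1; funext s
  rw [Finset.mul_sum]

lemma finsum_tendsto (hq : IsQMatrix q) (hP : IsTransitionFunction P)
    (hPq : BackwardEq q P) {F : Finset ℕ} {i : ℕ} (hi : i ∉ F) :
    Tendsto (fun t : ℝ => (1 / t) * ∑ j ∈ F, P t i j) (𝓝[>] 0)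
      (𝓝 (∑ j ∈ F, q i j)) := by
  have hcont : ContinuousOn (fun s => ∑ j ∈ F, gFun q P i j s) (Set.Ici 0) := by
    apply continuousOn_finset_sum
    intro j _
    exact gFun_continuousOn hq hP hPq i j
  have havg := avg_lemma (q i i) _ hcont
  have hval : ∑ j ∈ F, gFun q P i j 0 = ∑ j ∈ F, q i j := by
    apply Finset.sum_congr rfl
    intro j hj
    rw [gFun_zero hP i j, if_neg (by rintro rfl; exact hi hj)]
  rw [hval] at havg
  apply havg.congr'
  filter_upwards [self_mem_nhdsWithin] with t ht
  rw [sum_backwardEq hq hP hPq hi (le_of_lt ht)]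

lemma tail_pointwise (hq : IsQMatrix q) (hP : IsTransitionFunction P)
    {s : ℝ} (hs : 0 ≤ s) (i : ℕ) (K F' : Finset ℕ) (hKF' : ∀ k ∈ K, k ∉ F') :
    ∑ j ∈ F', gFun q P i j s ≤
      ∑ k ∈ K, _root_.offDiag q i k * (1 - P s k k) +
        ((∑' k, _root_.offDiag q i k) - ∑ k ∈ K, _root_.offDiag q i k) := by
  set c := fun k => _root_.offDiag q i k with hc_def
  have hc : Summable c := hq.2.2.1 i
  have hS : ∀ k, ∑ j ∈ F', P s k j ≤ 1 := fun k =>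
    le_trans (Summable.sum_le_tsum F' (fun j _ => hP.1 s k j hs) (hP.2.1 s k hs)) (hP.2.2.1 s k hs)
  have hS0 : ∀ k, 0 ≤ ∑ j ∈ F', P s k j :=
    fun k => Finset.sum_nonneg (fun j _ => hP.1 s k j hs)
  have h1 : ∑ j ∈ F', gFun q P i j s = ∑' k, c k * ∑ j ∈ F', P s k j := by
    simp only [gFun_eq]
    rw [← Summable.tsum_finsetSum (fun j _ => gFun_summand_summable hq hP hs i j)]
    congr 1; funext k; rw [Finset.mul_sum]
  have hsum2 : Summable (fun k => c k * ∑ j ∈ F', P s k j) := by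
    apply Summable.of_nonneg_of_le
      (fun k => mul_nonneg (offDiag_nonneg hq i k) (hS0 k))
      (fun k => mul_le_of_le_one_right (offDiag_nonneg hq i k) (hS k)) hc
  have hsplit := Summable.sum_add_tsum_compl (s := K) hsum2
  have hsplitc := Summable.sum_add_tsum_compl (s := K) hc
  rw [h1, ← hsplit]
  have hpart1 : ∑ k ∈ K, c k * ∑ j ∈ F', P s k j ≤ ∑ k ∈ K, c k * (1 - P s k k) := by
    apply Finset.sum_le_sum
    intro k hk
    apply mul_le_mul_of_nonneg_left _ (offDiag_nonneg hq i k)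
    have hins : P s k k + ∑ j ∈ F', P s k j = ∑ j ∈ insert k F', P s k j :=
      (Finset.sum_insert (hKF' k hk)).symm
    have hle : ∑ j ∈ insert k F', P s k j ≤ 1 :=
      le_trans (Summable.sum_le_tsum _ (fun j _ => hP.1 s k j hs) (hP.2.1 s k hs)) (hP.2.2.1 s k hs)
    linarith
  have hpart2 : (∑' (x : ↥((↑K : Set ℕ)ᶜ)), c ↑x * ∑ j ∈ F', P s (↑x) j) ≤ ∑' (x : ↥((↑K : Set ℕ)ᶜ)), c ↑x := by
    apply Summable.tsum_le_tsum
    · intro x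
      exact mul_le_of_le_one_right (offDiag_nonneg hq i ↑x) (hS ↑x)
    · exact hsum2.subtype _
    · exact hc.subtype _
  have : (∑' (x : ↥((↑K : Set ℕ)ᶜ)), c ↑x) = (∑' k, c k) - ∑ k ∈ K, c k := by linarith
  linarith

/-- The continuous bounding function for the tail. -/
noncomputable def boundFun (q : ℕ → ℕ → ℝ) (P : ℝ → ℕ → ℕ → ℝ) (i : ℕ) (K : Finset ℕ)
    (s : ℝ) : ℝ :=
  ∑ k ∈ K, _root_.offDiag q i k * (1 - P s k k) +
    ((∑' k, _root_.offDiag q i k) - ∑ k ∈ K, _root_.offDiag q i k)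

lemma boundFun_continuousOn (hq : IsQMatrix q) (hP : IsTransitionFunction P)
    (hPq : BackwardEq q P) (i : ℕ) (K : Finset ℕ) :
    ContinuousOn (boundFun q P i K) (Set.Ici 0) := by
  apply ContinuousOn.add
  · apply continuousOn_finset_sum
    intro k _
    exact continuousOn_const.mul (continuousOn_const.sub (P_continuousOn hq hP hPq k k))
  · exact continuousOn_const

lemma boundFun_zero (hP : IsTransitionFunction P) (i : ℕ) (K : Finset ℕ) :
    boundFun q P i K 0 = (∑' k, _root_.offDiag q i k) - ∑ k ∈ K, _root_.offDiag q i k := by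
  unfold boundFun
  have : ∀ k ∈ K, _root_.offDiag q i k * (1 - P 0 k k) = 0 := by
    intro k _
    rw [hP.2.2.2.1 k k, if_pos rfl]
    ring
  rw [Finset.sum_congr rfl this]
  simp

lemma tail_integral (hq : IsQMatrix q) (hP : IsTransitionFunction P)
    (hPq : BackwardEq q P) (i : ℕ) (K : Finset ℕ) {F' : Finset ℕ} (hiF' : i ∉ F')
    (hKF' : ∀ k ∈ K, k ∉ F') {t : ℝ} (ht : 0 ≤ t) :
    ∑ j ∈ F', P t i j ≤
      ∫ s in (0:ℝ)..t, Real.exp (q i i * (t - s)) * boundFun q P i K s := by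
  rw [sum_backwardEq hq hP hPq hiF' ht]
  apply intervalIntegral.integral_mono_on ht
  · apply ContinuousOn.intervalIntegrable
    rw [Set.uIcc_of_le ht]
    apply ContinuousOn.mul
    · exact (Real.continuous_exp.comp (continuous_const.mul
        (continuous_const.sub continuous_id))).continuousOn
    · exact (continuousOn_finset_sum _ (fun j _ => gFun_continuousOn hq hP hPq i j)).mono
        (fun x hx => hx.1)
  · apply ContinuousOn.intervalIntegrable
    rw [Set.uIcc_of_le ht]
    apply ContinuousOn.mul
    · exact (Real.continuous_exp.comp (continuous_const.mul
        (continuous_const.sub continuous_id))).continuousOn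
    · exact (boundFun_continuousOn hq hP hPq i K).mono (fun x hx => hx.1)
  · intro s hsi
    exact mul_le_mul_of_nonneg_left (tail_pointwise hq hP hsi.1 i K F' hKF')
      (Real.exp_nonneg _)

lemma bound_tendsto (hq : IsQMatrix q) (hP : IsTransitionFunction P)
    (hPq : BackwardEq q P) (i : ℕ) (K : Finset ℕ) :
    Tendsto (fun t : ℝ => (1 / t) *
        ∫ s in (0:ℝ)..t, Real.exp (q i i * (t - s)) * boundFun q P i K s) (𝓝[>] 0)
      (𝓝 ((∑' k, _root_.offDiag q i k) - ∑ k ∈ K, _root_.offDiag q i k)) := by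
  have := avg_lemma (q i i) _ (boundFun_continuousOn hq hP hPq i K)
  rwa [boundFun_zero hP i K] at this

end Basic

/-- for a substochastic transition function `P` satisfying the backward
integral equation for a Q-matrix `q`, for every `A ⊆ ℕ` and `i ∉ A`,
`lim_{t → 0⁺} (1/t) ∑_{j ∈ A} P t i j = ∑_{j ∈ A} q i j`. -/
theorem statement0 (q : ℕ → ℕ → ℝ) (hq : IsQMatrix q)
    (P : ℝ → ℕ → ℕ → ℝ) (hP : IsTransitionFunction P) (hPq : BackwardEq q P)
    (A : Set ℕ) (i : ℕ) (hi : i ∉ A) :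
    Filter.Tendsto (fun t : ℝ => (1 / t) * ∑' j : A, P t i j)
      (nhdsWithin 0 (Set.Ioi 0)) (nhds (∑' j : A, q i j)) := by
  classical
  set c : ℕ → ℝ := fun k => _root_.offDiag q i k with hcdef
  have hc : Summable c := hq.2.2.1 i
  set S : ℝ := ∑' k, c k with hSdef
  have hc0 : ∀ k, 0 ≤ c k := offDiag_nonneg hq i
  have hqc : ∀ j ∈ A, q i j = c j := by
    intro j hj
    simp only [hcdef, _root_.offDiag]
    rw [if_neg (by rintro rfl; exact hi hj)]
  rw [Metric.tendsto_nhds]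
  intro ε hε
  have hε4 : 0 < ε / 4 := by linarith
  obtain ⟨K, hK⟩ : ∃ K : Finset ℕ, S - ∑ k ∈ K, c k < ε / 4 := by
    obtain ⟨K, hK⟩ := ((Metric.tendsto_nhds.1 hc.hasSum) (ε / 4) hε4).exists
    rw [Real.dist_eq] at hK
    exact ⟨K, by linarith [(abs_lt.1 hK).1]⟩
  have htail0 : 0 ≤ S - ∑ k ∈ K, c k := by
    have := Summable.sum_le_tsum K (fun k _ => hc0 k) hc
    linarith
  set F : Finset ℕ := K.filter (fun k => k ∈ A) with hFdef
  have hFA : ∀ j ∈ F, j ∈ A := fun j hj => (Finset.mem_filter.1 hj).2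
  have hiF : i ∉ F := fun h => hi (hFA i h)
  have hKAF : ∀ k ∈ K, k ∈ A → k ∈ F := fun k hk hkA => Finset.mem_filter.2 ⟨hk, hkA⟩
  -- generic decomposition
  have hdecomp : ∀ g : ℕ → ℝ, (∀ j, 0 ≤ g j) → Summable (Set.indicator A g) →
      Summable (Set.indicator (A \ ↑F) g) ∧
      (∑' (j : A), g ↑j = ∑ j ∈ F, g j + ∑' j, Set.indicator (A \ ↑F) g j) := by
    intro g hg0 hgs
    have hindle : ∀ j, Set.indicator (A \ ↑F) g j ≤ Set.indicator A g j := by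
      intro j
      by_cases hj : j ∈ A \ ↑F
      · rw [Set.indicator_of_mem hj, Set.indicator_of_mem hj.1]
      · rw [Set.indicator_of_notMem hj]
        exact Set.indicator_nonneg (fun k _ => hg0 k) j
    have hind0 : ∀ j, 0 ≤ Set.indicator (A \ ↑F) g j :=
      fun j => Set.indicator_nonneg (fun k _ => hg0 k) j
    have hsum2 : Summable (Set.indicator (A \ ↑F) g) :=
      Summable.of_nonneg_of_le hind0 hindle hgs
    refine ⟨hsum2, ?_⟩
    rw [tsum_subtype A g]
    have hptw : ∀ j, Set.indicator A g j =
        (if j ∈ F then g j else 0) + Set.indicator (A \ ↑F) g j := by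
      intro j
      by_cases hjF : j ∈ F
      · have hjA : j ∈ A := hFA j hjF
        rw [Set.indicator_of_mem hjA, if_pos hjF,
          Set.indicator_of_notMem (fun h => h.2 (by exact_mod_cast hjF)), add_zero]
      · by_cases hjA : j ∈ A
        · have hmem : j ∈ A \ (↑F : Set ℕ) := ⟨hjA, fun hh => hjF (by exact_mod_cast hh)⟩
          rw [Set.indicator_of_mem hjA, if_neg hjF, Set.indicator_of_mem hmem, zero_add]
        · rw [Set.indicator_of_notMem hjA, if_neg hjF,
            Set.indicator_of_notMem (fun h => hjA h.1), add_zero]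
    have hsum1 : Summable (fun j => if j ∈ F then g j else 0) :=
      summable_of_ne_finset_zero (s := F) (fun b hb => by simp [hb])
    calc ∑' j, Set.indicator A g j
        = ∑' j, ((if j ∈ F then g j else 0) + Set.indicator (A \ ↑F) g j) := by
          exact tsum_congr hptw
      _ = (∑' j, if j ∈ F then g j else 0) + ∑' j, Set.indicator (A \ ↑F) g j :=
          Summable.tsum_add hsum1 hsum2
      _ = ∑ j ∈ F, g j + ∑' j, Set.indicator (A \ ↑F) g j := by
          congr 1
          rw [tsum_eq_sum (s := F) (f := fun j => if j ∈ F then g j else 0)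
            (fun b hb => by simp [hb])]
          exact Finset.sum_congr rfl (fun j hj => by simp [hj])
  -- filter trick
  have hfilter : ∀ (g : ℕ → ℝ) (s : Finset ℕ),
      ∑ j ∈ s, Set.indicator (A \ ↑F) g j =
        ∑ j ∈ s.filter (fun j => j ∈ A \ ↑F), g j := by
    intro g s
    rw [Finset.sum_filter]
    apply Finset.sum_congr rfl
    intro j _
    rw [Set.indicator_apply]
  have hF''K : ∀ s : Finset ℕ, ∀ k ∈ K, k ∉ s.filter (fun j => j ∈ A \ ↑F) := by
    intro s k hk hmem
    have := (Finset.mem_filter.1 hmem).2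
    exact this.2 (by exact_mod_cast hKAF k hk this.1)
  have hiF'' : ∀ s : Finset ℕ, i ∉ s.filter (fun j => j ∈ A \ ↑F) := by
    intro s hmem
    exact hi (Finset.mem_filter.1 hmem).2.1
  -- decomposition of the limit L
  have hqind : Summable (Set.indicator A (q i)) := by
    apply Summable.of_nonneg_of_le (fun j => Set.indicator_nonneg
      (fun k hk => by rw [hqc k hk]; exact hc0 k) j) _ hc
    intro j
    by_cases hj : j ∈ A
    · rw [Set.indicator_of_mem hj, hqc j hj]
    · rw [Set.indicator_of_notMem hj]; exact hc0 j
  -- q i is nonneg on A but we need global nonneg for hdecomp; use the function c on A instead: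
  have hqA : ∀ j, Set.indicator A (q i) j = Set.indicator A c j := by
    intro j
    by_cases hj : j ∈ A
    · rw [Set.indicator_of_mem hj, Set.indicator_of_mem hj, hqc j hj]
    · rw [Set.indicator_of_notMem hj, Set.indicator_of_notMem hj]
  have hdq := hdecomp c hc0 (by
    apply Summable.of_nonneg_of_le (fun j => Set.indicator_nonneg (fun k _ => hc0 k) j) _ hc
    intro j
    by_cases hj : j ∈ A
    · rw [Set.indicator_of_mem hj]
    · rw [Set.indicator_of_notMem hj]; exact hc0 j)
  set Rq : ℝ := ∑' j, Set.indicator (A \ ↑F) c j with hRqdef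
  have hLdecomp : (∑' (j : A), q i ↑j) = ∑ j ∈ F, q i j + Rq := by
    have h1 : (∑' (j : A), q i ↑j) = ∑' (j : A), c ↑j :=
      tsum_congr (fun j => hqc ↑j j.2)
    have h2 : ∑ j ∈ F, q i j = ∑ j ∈ F, c j :=
      Finset.sum_congr rfl (fun j hj => hqc j (hFA j hj))
    rw [h1, h2, hdq.2]
  have hRq0 : 0 ≤ Rq :=
    tsum_nonneg (fun j => Set.indicator_nonneg (fun k _ => hc0 k) j)
  have hRqle : Rq ≤ S - ∑ k ∈ K, c k := by
    apply Summable.tsum_le_of_sum_le hdq.1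
    intro s
    rw [hfilter c s]
    set F'' := s.filter (fun j => j ∈ A \ ↑F) with hF''def
    have hdisj : Disjoint F'' K := by
      rw [Finset.disjoint_left]
      intro j hj hjK
      exact hF''K s j hjK hj
    have : ∑ j ∈ F'', c j + ∑ k ∈ K, c k = ∑ j ∈ F'' ∪ K, c j :=
      (Finset.sum_union hdisj).symm
    have hle : ∑ j ∈ F'' ∪ K, c j ≤ S := Summable.sum_le_tsum _ (fun k _ => hc0 k) hc
    linarith
  -- eventual bounds
  have hFlim := finsum_tendsto hq hP hPq hiF
  have hBlim := bound_tendsto hq hP hPq i K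
  have hev1 := (Metric.tendsto_nhds.1 hFlim) (ε / 4) hε4
  have hev2 := (Metric.tendsto_nhds.1 hBlim) (ε / 4) hε4
  filter_upwards [hev1, hev2, self_mem_nhdsWithin] with t h1 h2 ht
  have ht0 : (0:ℝ) < t := ht
  have ht0' : (0:ℝ) ≤ t := le_of_lt ht0
  -- decompose the P sum
  have hdP := hdecomp (fun j => P t i j) (fun j => hP.1 t i j ht0')
    (by
      apply Summable.of_nonneg_of_le
        (fun j => Set.indicator_nonneg (fun k _ => hP.1 t i k ht0') j) _ (hP.2.1 t i ht0')
      intro j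
      by_cases hj : j ∈ A
      · rw [Set.indicator_of_mem hj]
      · rw [Set.indicator_of_notMem hj]; exact hP.1 t i j ht0')
  set RP : ℝ := ∑' j, Set.indicator (A \ ↑F) (fun j => P t i j) j with hRPdef
  have hRP0 : 0 ≤ RP :=
    tsum_nonneg (fun j => Set.indicator_nonneg (fun k _ => hP.1 t i k ht0') j)
  set B : ℝ := ∫ s in (0:ℝ)..t, Real.exp (q i i * (t - s)) * boundFun q P i K s with hBdef
  have hRPle : RP ≤ B := by
    apply Summable.tsum_le_of_sum_le hdP.1
    intro s
    rw [hfilter (fun j => P t i j) s]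
    exact tail_integral hq hP hPq i K (hiF'' s) (hF''K s) ht0'
  -- put everything together
  rw [Real.dist_eq] at h1 h2 ⊢
  rw [hdP.2, hLdecomp]
  have hinv0 : 0 ≤ 1 / t := by positivity
  have hRPB : (1 / t) * RP ≤ (1 / t) * B := mul_le_mul_of_nonneg_left hRPle hinv0
  have hRP0' : 0 ≤ (1 / t) * RP := mul_nonneg hinv0 hRP0
  have habs1 : |(1 / t) * ∑ j ∈ F, P t i j - ∑ j ∈ F, q i j| < ε / 4 := h1
  have habs2 : |(1 / t) * B - (S - ∑ k ∈ K, c k)| < ε / 4 := h2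
  have hBlt : (1 / t) * B < (S - ∑ k ∈ K, c k) + ε / 4 := by
    have := (abs_lt.1 habs2).2
    linarith
  have e1 := (abs_lt.1 habs1).1
  have e2 := (abs_lt.1 habs1).2
  rw [mul_add, abs_lt]
  constructor <;> nlinarith
end

section
/- For every α > 1, the counterexample matrices q⁽¹⁾, q⁽²⁾ satisfy condition (1.2) (equivalently, condition (1.3)). -/
open scoped BigOperators
open Filter Topology

/-- The first counterexample birth-death Q-matrix: `q i (i-1) = q i (i+1) = (i+1)²`
(for `i ≥ 1`; `q 0 1 = 1`), conservative diagonal. -/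
noncomputable def qCE1 : ℕ → ℕ → ℝ := fun i j =>
  if j = i + 1 then ((i : ℝ) + 1) ^ 2
  else if j + 1 = i then ((i : ℝ) + 1) ^ 2
  else if j = i then (if i = 0 then -1 else -2 * ((i : ℝ) + 1) ^ 2)
  else 0

/-- The second counterexample birth-death Q-matrix: `q i (i-1) = (i+1)²`,
`q i (i+1) = α(i+1)²`, conservative diagonal. -/
noncomputable def qCE2 (α : ℝ) : ℕ → ℕ → ℝ := fun i j =>
  if j = i + 1 then α * ((i : ℝ) + 1) ^ 2
  else if j + 1 = i then ((i : ℝ) + 1) ^ 2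
  else if j = i then (if i = 0 then -α else -(1 + α) * ((i : ℝ) + 1) ^ 2)
  else 0

/-! ### Auxiliary lemmas for statement3 -/

lemma qCE1_far {i j : ℕ} (h1 : j ≠ i+1) (h2 : j+1 ≠ i) (h3 : j ≠ i) : qCE1 i j = 0 := by
  simp [qCE1, h1, h2, h3]

lemma qCE2_far {α : ℝ} {i j : ℕ} (h1 : j ≠ i+1) (h2 : j+1 ≠ i) (h3 : j ≠ i) :
    qCE2 α i j = 0 := by
  simp [qCE2, h1, h2, h3]

lemma qCE1_succ (i : ℕ) : qCE1 i (i+1) = ((i:ℝ)+1)^2 := by simp [qCE1]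

lemma qCE2_succ (α : ℝ) (i : ℕ) : qCE2 α i (i+1) = α * ((i:ℝ)+1)^2 := by simp [qCE2]

lemma qCE1_pred (n : ℕ) : qCE1 (n+1) n = (((n:ℝ)+1)+1)^2 := by
  simp only [qCE1]
  split_ifs <;> first | (exfalso; omega) | simp_all | (push_cast; ring)

lemma qCE2_pred (α : ℝ) (n : ℕ) : qCE2 α (n+1) n = (((n:ℝ)+1)+1)^2 := by
  simp only [qCE2]
  split_ifs <;> first | (exfalso; omega) | simp_all | (push_cast; ring)

lemma qCE1_diag (n : ℕ) : qCE1 (n+1) (n+1) = -2 * (((n:ℝ)+1)+1)^2 := by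
  simp only [qCE1]
  split_ifs <;> first | (exfalso; omega) | simp_all | (push_cast; ring)

lemma qCE2_diag (α : ℝ) (n : ℕ) : qCE2 α (n+1) (n+1) = -(1+α) * (((n:ℝ)+1)+1)^2 := by
  simp only [qCE2]
  split_ifs <;> first | (exfalso; omega) | simp_all | (push_cast; ring)

lemma tailSum_eq (f : ℕ → ℝ) (k : ℕ) (s : Finset ℕ)
    (h : ∀ j, j ∉ s → k ≤ j → f j = 0) (hk : ∀ j ∈ s, k ≤ j) :
    tailSum f k = ∑ j ∈ s, f j := by
  rw [tailSum, tsum_eq_sum (s := s) ?_]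
  · exact Finset.sum_congr rfl fun j hj => if_pos (hk j hj)
  · intro j hj
    split
    · exact h j hj ‹_›
    · rfl

/-- tails strictly beyond the support are 0, for qCE1 -/
lemma T1_hi (i k : ℕ) (h : i + 2 ≤ k) : tailSum (qCE1 i) k = 0 := by
  rw [tailSum_eq (qCE1 i) k ∅ (fun j _ hj => qCE1_far (by omega) (by omega) (by omega))
    (by simp)]
  simp

lemma T2_hi (α : ℝ) (m k : ℕ) (h : m + 2 ≤ k) : tailSum (qCE2 α m) k = 0 := by
  rw [tailSum_eq (qCE2 α m) k ∅ (fun j _ hj => qCE2_far (by omega) (by omega) (by omega))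
    (by simp)]
  simp

lemma T1_succ (i : ℕ) : tailSum (qCE1 i) (i+1) = ((i:ℝ)+1)^2 := by
  rw [tailSum_eq (qCE1 i) (i+1) {i+1}
    (fun j hj hk => qCE1_far (by simpa using hj) (by omega) (by omega))
    (by simp)]
  simp [qCE1_succ]

lemma T2_succ (α : ℝ) (m : ℕ) : tailSum (qCE2 α m) (m+1) = α * ((m:ℝ)+1)^2 := by
  rw [tailSum_eq (qCE2 α m) (m+1) {m+1}
    (fun j hj hk => qCE2_far (by simpa using hj) (by omega) (by omega))
    (by simp)]
  simp [qCE2_succ]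

lemma T1_diag (i : ℕ) (h : 1 ≤ i) : tailSum (qCE1 i) i = -(((i:ℝ)+1)^2) := by
  obtain ⟨n, rfl⟩ : ∃ n, i = n + 1 := ⟨i - 1, by omega⟩
  rw [tailSum_eq (qCE1 (n+1)) (n+1) {n+1, n+2}
    (fun j hj hk => qCE1_far (by simp at hj; omega) (by omega) (by simp at hj; omega))
    (by intro j hj; simp at hj; omega)]
  rw [Finset.sum_insert (by simp), Finset.sum_singleton]
  have h1 : qCE1 (n+1) (n+2) = (((n:ℝ)+1)+1)^2 := by
      rw [show n+2 = (n+1)+1 from rfl, qCE1_succ]; push_cast; ring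
  rw [qCE1_diag, h1]
  push_cast; ring

lemma T2_diag (α : ℝ) (m : ℕ) (h : 1 ≤ m) : tailSum (qCE2 α m) m = -(((m:ℝ)+1)^2) := by
  obtain ⟨n, rfl⟩ : ∃ n, m = n + 1 := ⟨m - 1, by omega⟩
  rw [tailSum_eq (qCE2 α (n+1)) (n+1) {n+1, n+2}
    (fun j hj hk => qCE2_far (by simp at hj; omega) (by omega) (by simp at hj; omega))
    (by intro j hj; simp at hj; omega)]
  rw [Finset.sum_insert (by simp), Finset.sum_singleton]
  have h1 : qCE2 α (n+1) (n+2) = α * (((n:ℝ)+1)+1)^2 := by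
      rw [show n+2 = (n+1)+1 from rfl, qCE2_succ]; push_cast; ring
  rw [qCE2_diag, h1]
  push_cast; ring

lemma T1_low (i k : ℕ) (h : k ≤ i) (h2 : k < i ∨ i = 0) : tailSum (qCE1 i) k = 0 := by
  rcases h2 with h2 | rfl
  · obtain ⟨n, rfl⟩ : ∃ n, i = n + 1 := ⟨i - 1, by omega⟩
    rw [tailSum_eq (qCE1 (n+1)) k {n, n+1, n+2}
      (fun j hj hk => qCE1_far (by simp at hj; omega) (by simp at hj; omega)
        (by simp at hj; omega))
      (by intro j hj; simp at hj; omega)]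
    rw [Finset.sum_insert (by simp), Finset.sum_insert (by simp), Finset.sum_singleton]
    have h1 : qCE1 (n+1) (n+2) = (((n:ℝ)+1)+1)^2 := by
      rw [show n+2 = (n+1)+1 from rfl, qCE1_succ]; push_cast; ring
    rw [qCE1_pred, qCE1_diag, h1]
    ring
  · interval_cases k
    rw [tailSum_eq (qCE1 0) 0 {0, 1}
      (fun j hj hk => qCE1_far (by simp at hj; omega) (by omega) (by simp at hj; omega))
      (by simp)]
    rw [Finset.sum_insert (by simp), Finset.sum_singleton]
    have h1 : qCE1 0 1 = ((0:ℝ)+1)^2 := by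
      rw [show (1:ℕ) = 0+1 from rfl, qCE1_succ]; norm_num
    have h0 : qCE1 0 0 = -1 := by simp [qCE1]
    rw [h0, h1]; norm_num

lemma T2_low (α : ℝ) (m k : ℕ) (h : k ≤ m) (h2 : k < m ∨ m = 0) :
    tailSum (qCE2 α m) k = 0 := by
  rcases h2 with h2 | rfl
  · obtain ⟨n, rfl⟩ : ∃ n, m = n + 1 := ⟨m - 1, by omega⟩
    rw [tailSum_eq (qCE2 α (n+1)) k {n, n+1, n+2}
      (fun j hj hk => qCE2_far (by simp at hj; omega) (by simp at hj; omega)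
        (by simp at hj; omega))
      (by intro j hj; simp at hj; omega)]
    rw [Finset.sum_insert (by simp), Finset.sum_insert (by simp), Finset.sum_singleton]
    have h1 : qCE2 α (n+1) (n+2) = α * (((n:ℝ)+1)+1)^2 := by
      rw [show n+2 = (n+1)+1 from rfl, qCE2_succ]; push_cast; ring
    rw [qCE2_pred, qCE2_diag, h1]
    ring
  · interval_cases k
    rw [tailSum_eq (qCE2 α 0) 0 {0, 1}
      (fun j hj hk => qCE2_far (by simp at hj; omega) (by omega) (by simp at hj; omega))
      (by simp)]
    rw [Finset.sum_insert (by simp), Finset.sum_singleton]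
    have h1 : qCE2 α 0 1 = α * ((0:ℝ)+1)^2 := by
      rw [show (1:ℕ) = 0+1 from rfl, qCE2_succ]; norm_num
    have h0 : qCE2 α 0 0 = -α := by simp [qCE2]
    rw [h0, h1]; ring

lemma S1_zero (i k : ℕ) (h : k + 1 < i) : ∑ j ∈ Finset.range (k+1), qCE1 i j = 0 :=
  Finset.sum_eq_zero fun j hj => by
    simp only [Finset.mem_range] at hj
    exact qCE1_far (by omega) (by omega) (by omega)

lemma S2_zero (α : ℝ) (m k : ℕ) (h : k + 1 < m) :
    ∑ j ∈ Finset.range (k+1), qCE2 α m j = 0 :=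
  Finset.sum_eq_zero fun j hj => by
    simp only [Finset.mem_range] at hj
    exact qCE2_far (by omega) (by omega) (by omega)

lemma S1_val (k : ℕ) : ∑ j ∈ Finset.range (k+1), qCE1 (k+1) j = (((k:ℝ)+1)+1)^2 := by
  rw [Finset.sum_eq_single_of_mem k (by simp)
    (fun j hj hne => by simp only [Finset.mem_range] at hj
                        exact qCE1_far (by omega) (by omega) (by omega))]
  exact qCE1_pred k

lemma S2_val (α : ℝ) (k : ℕ) :
    ∑ j ∈ Finset.range (k+1), qCE2 α (k+1) j = (((k:ℝ)+1)+1)^2 := by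
  rw [Finset.sum_eq_single_of_mem k (by simp)
    (fun j hj hne => by simp only [Finset.mem_range] at hj
                        exact qCE2_far (by omega) (by omega) (by omega))]
  exact qCE2_pred α k

lemma cond12_main (α : ℝ) (hα : 1 < α) : Cond12 qCE1 (qCE2 α) := by
  intro i m him k hk
  have hα0 : (0:ℝ) < α := by linarith
  rcases hk with hk | hk
  · -- k ≤ i
    rcases Nat.lt_or_ge k i with h2 | h2
    · -- k < i ≤ m
      rw [T1_low i k hk (Or.inl h2), T2_low α m k (by omega) (Or.inl (by omega))]
    · have hki : k = i := le_antisymm hk h2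
      subst hki
      rcases Nat.eq_zero_or_pos k with rfl | hk1
      · rw [T1_low 0 0 le_rfl (Or.inr rfl)]
        rcases Nat.eq_zero_or_pos m with rfl | hm1
        · rw [T2_low α 0 0 le_rfl (Or.inr rfl)]
        · rw [T2_low α m 0 (by omega) (Or.inl hm1)]
      · rw [T1_diag k hk1]
        rcases Nat.lt_or_ge k m with h3 | h3
        · rw [T2_low α m k (by omega) (Or.inl h3)]
          exact neg_nonpos.mpr (sq_nonneg _)
        · have : k = m := le_antisymm him h3
          subst this
          rw [T2_diag α k hk1]
  · -- m + 1 ≤ k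
    rcases Nat.lt_or_ge k (m+2) with h2 | h2
    · have hk2 : k = m + 1 := by omega
      subst hk2
      rw [T2_succ α m]
      rcases Nat.lt_or_ge i m with h3 | h3
      · rw [T1_hi i (m+1) (by omega)]
        positivity
      · have : i = m := le_antisymm him h3
        subst this
        rw [T1_succ i]
        nlinarith [sq_nonneg ((i:ℝ)+1)]
    · rw [T1_hi i k (by omega), T2_hi α m k h2]

/-- for every `α > 1` the counterexample matrices satisfy
condition (1.2) (equivalently (1.3)). -/
theorem statement3 (α : ℝ) (hα : 1 < α) :
    Cond12 qCE1 (qCE2 α) ∧ Cond13 qCE1 (qCE2 α) := by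
  have h12 := cond12_main α hα
  refine ⟨h12, fun i m him => ⟨fun k hk => h12 i m him k (Or.inr hk), fun k hk => ?_⟩⟩
  -- k + 1 ≤ i ≤ m
  rcases Nat.lt_or_ge (k+1) i with h2 | h2
  · rw [S1_zero i k h2, S2_zero α m k (by omega)]
  · have hik : i = k + 1 := by omega
    subst hik
    rw [S1_val k]
    rcases Nat.lt_or_ge (k+1) m with h3 | h3
    · rw [S2_zero α m k h3]
      exact sq_nonneg _
    · have : m = k + 1 := by omega
      subst this
      rw [S2_val α k]
end

section
/- For every real β > 0, the series ∑_{n=0}^∞ β^{−(n+1)} · (∑_{k=0}^n β^k/(k+1)²) converges if and only if β > 1. -/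
open scoped BigOperators
open Filter Topology

/-- for `β > 0`, Feller's series
`∑_n β^{-(n+1)} ∑_{k=0}^n β^k/(k+1)²` converges iff `β > 1`. -/
theorem statement5 (β : ℝ) (hβ : 0 < β) :
    Summable (fun n : ℕ =>
      (1 / β ^ (n + 1)) * ∑ k ∈ Finset.range (n + 1), β ^ k / ((k : ℝ) + 1) ^ 2)
    ↔ 1 < β := by
  have hβ0 : β ≠ 0 := ne_of_gt hβ
  constructor
  · intro h
    by_contra hle
    push_neg at hle
    have h1 : ∀ n : ℕ, (1:ℝ) ≤
        (1 / β ^ (n + 1)) * ∑ k ∈ Finset.range (n + 1), β ^ k / ((k : ℝ) + 1) ^ 2 := by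
      intro n
      have hpow : β ^ (n + 1) ≤ 1 := pow_le_one₀ hβ.le hle
      have h1b : (1:ℝ) ≤ 1 / β ^ (n + 1) := by
        rw [le_div_iff₀ (pow_pos hβ _)]; simpa using hpow
      have hsum : (1:ℝ) ≤ ∑ k ∈ Finset.range (n + 1), β ^ k / ((k : ℝ) + 1) ^ 2 := by
        have := Finset.single_le_sum (f := fun k : ℕ => β ^ k / ((k : ℝ) + 1) ^ 2)
          (fun i _ => by positivity)
          (show (0:ℕ) ∈ Finset.range (n + 1) from Finset.mem_range.mpr n.succ_pos)
        simpa using this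
      calc (1:ℝ) = 1 * 1 := by ring
      _ ≤ (1 / β ^ (n + 1)) * ∑ k ∈ Finset.range (n + 1), β ^ k / ((k : ℝ) + 1) ^ 2 :=
        mul_le_mul h1b hsum one_pos.le (le_trans zero_le_one h1b)
    have : Summable (fun _ : ℕ => (1:ℝ)) :=
      Summable.of_nonneg_of_le (fun _ => zero_le_one) h1 h
    rw [summable_const_iff] at this
    exact one_ne_zero this
  · intro hβ1
    have hf : Summable fun k : ℕ => ‖(1:ℝ) / ((k : ℝ) + 1) ^ 2‖ := by
      have h2 : Summable fun k : ℕ => (1:ℝ) / (k : ℝ) ^ 2 :=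
        Real.summable_one_div_nat_pow.mpr (by norm_num)
      have : Summable fun k : ℕ => (1:ℝ) / ((k : ℝ) + 1) ^ 2 := by
        have := (summable_nat_add_iff 1).mpr h2
        exact this.congr fun k => by push_cast; ring_nf
      exact this.abs.congr fun k => (Real.norm_eq_abs _).symm
    have hg : Summable fun j : ℕ => ‖(1 / β) ^ (j + 1)‖ := by
      have hb : |1 / β| < 1 := by
        rw [abs_of_pos (by positivity)]
        rw [div_lt_one hβ]; exact hβ1
      have : Summable fun j : ℕ => |1 / β| ^ (j + 1) :=
        ((summable_geometric_of_lt_one (abs_nonneg _) hb).mul_left _).congr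
          (fun j => (pow_succ' _ _).symm)
      exact this.congr fun j => by rw [Real.norm_eq_abs, abs_pow]
    have hcp := (summable_norm_sum_mul_range_of_summable_norm hf hg).of_norm
    refine hcp.congr fun n => ?_
    rw [Finset.mul_sum]
    refine Finset.sum_congr rfl fun k hk => ?_
    have hk' : k ≤ n := Nat.lt_succ_iff.mp (Finset.mem_range.mp hk)
    have hnk : n + 1 = k + (n - k + 1) := by omega
    have he : (1 / β) ^ (n - k + 1) = β ^ k / β ^ (n + 1) := by
      rw [div_pow, one_pow, div_eq_div_iff (by positivity) (by positivity), one_mul,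
        hnk, pow_add]
    rw [he]
    ring
end

section
/- Let q be a Q-matrix on ℕ, let (E_n) be an increasing sequence of subsets of ℕ with ⋃_n E_n = ℕ, and for each n let q⁽ⁿ⁾ be any Q-matrix on ℕ such that q⁽ⁿ⁾ i j = q i j for all i, j ∈ E_n and q⁽ⁿ⁾ i j = 0 whenever i ∉ E_n. Let P⁽ⁿ⁾ be the minimal Q-process for q⁽ⁿ⁾ and P the minimal Q-process for q. Then for every n, P⁽ⁿ⁾ t i j ≤ P⁽ⁿ⁺¹⁾ t i j for all i, j ∈ E_n and t ≥ 0, and lim_{n→∞} P⁽ⁿ⁾ t i j = P t i j for all i, j and t ≥ 0. -/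
open scoped BigOperators
open Filter Topology

open MeasureTheory

set_option maxHeartbeats 1000000

namespace MinQ

noncomputable def pt (t : ℝ) : ℝ := max t 0

lemma pt_nonneg (t : ℝ) : 0 ≤ pt t := le_max_right _ _
lemma pt_eq {t : ℝ} (ht : 0 ≤ t) : pt t = t := max_eq_left ht
lemma pt_pt (t : ℝ) : pt (pt t) = pt t := pt_eq (pt_nonneg t)
@[fun_prop] lemma continuous_pt : Continuous pt := continuous_id.max continuous_const

section Q
variable {q : ℕ → ℕ → ℝ}

lemma offDiag_nonneg (hq : IsQMatrix q) (i j : ℕ) : 0 ≤ offDiag q i j := by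
  unfold offDiag; split
  · exact le_rfl
  · exact hq.1 i j (fun h => by simp_all)

lemma offDiag_summable (hq : IsQMatrix q) (i : ℕ) : Summable (fun k => offDiag q i k) := hq.2.2.1 i

lemma offDiag_tsum_le (hq : IsQMatrix q) (i : ℕ) : (∑' k, offDiag q i k) ≤ - q i i := hq.2.2.2 i

lemma diag_nonpos (hq : IsQMatrix q) (i : ℕ) : q i i ≤ 0 := hq.2.1 i

end Q

/-- The weighted sum `∑_{k ≠ i} q i k * P s k j`. -/
noncomputable def gf (q : ℕ → ℕ → ℝ) (P : ℝ → ℕ → ℕ → ℝ) (i j : ℕ) (s : ℝ) : ℝ :=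
  ∑' k, offDiag q i k * P s k j

lemma gf_eq_ite (q : ℕ → ℕ → ℝ) (P : ℝ → ℕ → ℕ → ℝ) (i j : ℕ) (s : ℝ) :
    (∑' k, if k = i then 0 else q i k * P s k j) = gf q P i j s := by
  simp only [gf]
  refine tsum_congr fun k => ?_
  unfold offDiag
  split <;> simp_all

section gf
variable {q : ℕ → ℕ → ℝ} {P : ℝ → ℕ → ℕ → ℝ}

lemma gf_summable (hq : IsQMatrix q) {i j : ℕ} {s : ℝ} (h0 : ∀ k, 0 ≤ P s k j) (h1 : ∀ k, P s k j ≤ 1) :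
    Summable (fun k => offDiag q i k * P s k j) := by
  refine Summable.of_nonneg_of_le (fun k => mul_nonneg (offDiag_nonneg hq i k) (h0 k))
    (fun k => ?_) (offDiag_summable hq i)
  calc offDiag q i k * P s k j ≤ offDiag q i k * 1 :=
        mul_le_mul_of_nonneg_left (h1 k) (offDiag_nonneg hq i k)
    _ = offDiag q i k := mul_one _

lemma gf_nonneg (hq : IsQMatrix q) {i j : ℕ} {s : ℝ} (h0 : ∀ k, 0 ≤ P s k j) : 0 ≤ gf q P i j s :=
  tsum_nonneg fun k => mul_nonneg (offDiag_nonneg hq i k) (h0 k)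

lemma gf_le (hq : IsQMatrix q) {i j : ℕ} {s : ℝ} (h0 : ∀ k, 0 ≤ P s k j) (h1 : ∀ k, P s k j ≤ 1) :
    gf q P i j s ≤ - q i i := by
  refine le_trans (Summable.tsum_le_tsum (fun k => ?_) (gf_summable hq h0 h1) (offDiag_summable hq i))
    (offDiag_tsum_le hq i)
  calc offDiag q i k * P s k j ≤ offDiag q i k * 1 :=
        mul_le_mul_of_nonneg_left (h1 k) (offDiag_nonneg hq i k)
    _ = offDiag q i k := mul_one _

lemma gf_mono (hq : IsQMatrix q) {P' : ℝ → ℕ → ℕ → ℝ} {i j : ℕ} {s : ℝ}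
    (h0 : ∀ k, 0 ≤ P s k j) (hle : ∀ k, P s k j ≤ P' s k j)
    (h0' : ∀ k, 0 ≤ P' s k j) (h1' : ∀ k, P' s k j ≤ 1) :
    gf q P i j s ≤ gf q P' i j s := by
  refine Summable.tsum_le_tsum (fun k => mul_le_mul_of_nonneg_left (hle k) (offDiag_nonneg hq i k))
    ?_ (gf_summable hq h0' h1')
  exact gf_summable hq h0 (fun k => le_trans (hle k) (h1' k))

lemma gf_continuous (hq : IsQMatrix q) {i j : ℕ} (hc : ∀ k, Continuous (fun s => P s k j))
    (h0 : ∀ s k, 0 ≤ P s k j) (h1 : ∀ s k, P s k j ≤ 1) :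
    Continuous (gf q P i j) := by
  refine continuous_tsum (fun k => (continuous_const.mul (hc k))) (offDiag_summable hq i)
    (fun k s => ?_)
  rw [Real.norm_eq_abs, abs_mul, abs_of_nonneg (offDiag_nonneg hq i k),
    abs_of_nonneg (h0 s k)]
  calc offDiag q i k * P s k j ≤ offDiag q i k * 1 :=
        mul_le_mul_of_nonneg_left (h1 s k) (offDiag_nonneg hq i k)
    _ = offDiag q i k := mul_one _

end gf

/-- Integral kernel `e^{at} ∫_0^t e^{-as} G s ds`. -/
noncomputable def IK (a t : ℝ) (G : ℝ → ℝ) : ℝ :=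
  Real.exp (a * t) * ∫ s in (0:ℝ)..t, Real.exp (-a * s) * G s

lemma IK_eq (a t : ℝ) (G : ℝ → ℝ) :
    IK a t G = ∫ s in (0:ℝ)..t, Real.exp (a * (t - s)) * G s := by
  rw [IK, ← intervalIntegral.integral_const_mul]
  refine intervalIntegral.integral_congr fun s _ => ?_
  rw [← mul_assoc, ← Real.exp_add]
  ring_nf

lemma intervalIntegrable_of_bdd {G : ℝ → ℝ} (hG : Measurable G) {C : ℝ}
    (hbd : ∀ s, |G s| ≤ C) (a b : ℝ) : IntervalIntegrable G volume a b := by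
  refine (intervalIntegrable_const (c := C)).mono_fun hG.aestronglyMeasurable ?_
  filter_upwards with s
  rw [Real.norm_eq_abs, Real.norm_eq_abs]
  exact le_trans (hbd s) (le_abs_self C)

lemma IK_nonneg {a t : ℝ} (ht : 0 ≤ t) {G : ℝ → ℝ} (hG : ∀ s ∈ Set.Icc 0 t, 0 ≤ G s) :
    0 ≤ IK a t G := by
  refine mul_nonneg (Real.exp_nonneg _) (intervalIntegral.integral_nonneg ht fun s hs => ?_)
  exact mul_nonneg (Real.exp_nonneg _) (hG s hs)

lemma IK_mono {a t : ℝ} (ht : 0 ≤ t) {G G' : ℝ → ℝ}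
    (hle : ∀ s ∈ Set.Icc 0 t, G s ≤ G' s)
    (hG : IntervalIntegrable (fun s => Real.exp (-a * s) * G s) volume 0 t)
    (hG' : IntervalIntegrable (fun s => Real.exp (-a * s) * G' s) volume 0 t) :
    IK a t G ≤ IK a t G' := by
  refine mul_le_mul_of_nonneg_left ?_ (Real.exp_nonneg _)
  exact intervalIntegral.integral_mono_on ht hG hG' fun s hs =>
    mul_le_mul_of_nonneg_left (hle s hs) (Real.exp_nonneg _)

lemma integral_exp_neg (a t : ℝ) :
    (∫ s in (0:ℝ)..t, Real.exp (-a * s) * -a) = Real.exp (-a * t) - 1 := by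
  have h : ∀ x ∈ Set.uIcc (0:ℝ) t, HasDerivAt (fun u => Real.exp (-a * u))
      (Real.exp (-a * x) * -a) x := by
    intro x _
    simpa [mul_comm] using ((hasDerivAt_id x).const_mul (-a)).exp
  have := intervalIntegral.integral_eq_sub_of_hasDerivAt h
    (Continuous.intervalIntegrable (by fun_prop) 0 t)
  simpa using this

lemma IK_le_of_le {a t : ℝ} (_ha : a ≤ 0) (ht : 0 ≤ t) {G : ℝ → ℝ}
    (hle : ∀ s ∈ Set.Icc 0 t, G s ≤ -a)
    (hG : IntervalIntegrable (fun s => Real.exp (-a * s) * G s) volume 0 t) :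
    IK a t G ≤ 1 - Real.exp (a * t) := by
  have h1 : IK a t G ≤ IK a t (fun _ => -a) := by
    refine IK_mono ht hle hG ?_
    exact Continuous.intervalIntegrable (by fun_prop) 0 t
  refine le_trans h1 ?_
  rw [IK, integral_exp_neg a t, mul_sub, ← Real.exp_add]
  have : a * t + -a * t = 0 := by ring
  rw [this, Real.exp_zero]
  simp
/-- The Feller iterates for the backward integral recursion. -/
noncomputable def pseq (q : ℕ → ℕ → ℝ) : ℕ → ℝ → ℕ → ℕ → ℝ
  | 0 => fun t i j => (if i = j then 1 else 0) * Real.exp (q i i * pt t)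
  | m + 1 => fun t i j =>
      (if i = j then 1 else 0) * Real.exp (q i i * pt t) +
        IK (q i i) (pt t) (gf q (pseq q m) i j)

lemma pseq_zero (q : ℕ → ℕ → ℝ) (t : ℝ) (i j : ℕ) :
    pseq q 0 t i j = (if i = j then 1 else 0) * Real.exp (q i i * pt t) := rfl

lemma pseq_succ (q : ℕ → ℕ → ℝ) (m : ℕ) (t : ℝ) (i j : ℕ) :
    pseq q (m + 1) t i j = (if i = j then 1 else 0) * Real.exp (q i i * pt t) +
      IK (q i i) (pt t) (gf q (pseq q m) i j) := rfl

lemma pseq_pt (q : ℕ → ℕ → ℝ) (m : ℕ) (t : ℝ) (i j : ℕ) :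
    pseq q m (pt t) i j = pseq q m t i j := by
  cases m <;> simp [pseq_zero, pseq_succ, pt_pt]

lemma IK_continuous (a : ℝ) {G : ℝ → ℝ} (hG : Continuous G) :
    Continuous fun t => IK a (pt t) G := by
  have hI : Continuous fun T => ∫ s in (0:ℝ)..T, Real.exp (-a * s) * G s :=
    intervalIntegral.continuous_primitive
      (fun u v => Continuous.intervalIntegrable
        ((Real.continuous_exp.comp (continuous_const.mul continuous_id)).mul hG) u v) 0
  exact (Real.continuous_exp.comp (continuous_const.mul continuous_pt)).mul
    (hI.comp continuous_pt)

section pseqBasic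
variable {q : ℕ → ℕ → ℝ}

lemma pseq_basic (hq : IsQMatrix q) (m : ℕ) :
    (∀ t i j, 0 ≤ pseq q m t i j ∧ pseq q m t i j ≤ 1) ∧
      (∀ i j, Continuous fun t => pseq q m t i j) := by
  induction m with
  | zero =>
    constructor
    · intro t i j
      constructor
      · exact mul_nonneg (by positivity) (Real.exp_nonneg _)
      · calc (if i = j then (1:ℝ) else 0) * Real.exp (q i i * pt t)
            ≤ 1 * 1 := by
              refine mul_le_mul (by split <;> norm_num) ?_ (Real.exp_nonneg _) one_pos.le
              exact Real.exp_le_one_iff.mpr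
                (mul_nonpos_of_nonpos_of_nonneg (diag_nonpos hq i) (pt_nonneg t))
          _ = 1 := one_mul 1
    · intro i j
      simp only [pseq_zero]
      fun_prop
  | succ m ih =>
    obtain ⟨hb, hc⟩ := ih
    have h0 : ∀ s k j', 0 ≤ pseq q m s k j' := fun s k j' => (hb s k j').1
    have h1 : ∀ s k j', pseq q m s k j' ≤ 1 := fun s k j' => (hb s k j').2
    constructor
    · intro t i j
      have hGc : Continuous (gf q (pseq q m) i j) :=
        gf_continuous hq (fun k => hc k j) (fun s k => h0 s k j) (fun s k => h1 s k j)
      have hG0 : ∀ s, 0 ≤ gf q (pseq q m) i j s := fun s =>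
        gf_nonneg hq (fun k => h0 s k j)
      have hGle : ∀ s, gf q (pseq q m) i j s ≤ -(q i i) := fun s =>
        gf_le hq (fun k => h0 s k j) (fun k => h1 s k j)
      constructor
      · rw [pseq_succ]
        have := IK_nonneg (a := q i i) (pt_nonneg t)
          (G := gf q (pseq q m) i j) (fun s _ => hG0 s)
        positivity
      · rw [pseq_succ]
        have hIK : IK (q i i) (pt t) (gf q (pseq q m) i j) ≤
            1 - Real.exp (q i i * pt t) := by
          refine IK_le_of_le (diag_nonpos hq i) (pt_nonneg t) (fun s _ => hGle s) ?_
          exact Continuous.intervalIntegrable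
            ((Real.continuous_exp.comp (continuous_const.mul continuous_id)).mul hGc) 0 (pt t)
        have hδ : (if i = j then (1:ℝ) else 0) * Real.exp (q i i * pt t) ≤
            Real.exp (q i i * pt t) := by
          refine mul_le_mul (by split <;> norm_num) le_rfl (Real.exp_nonneg _) one_pos.le
            |>.trans (one_mul _).le
        linarith
    · intro i j
      have hGc : Continuous (gf q (pseq q m) i j) :=
        gf_continuous hq (fun k => hc k j) (fun s k => h0 s k j) (fun s k => h1 s k j)
      exact Continuous.add (by fun_prop) (IK_continuous _ hGc)

lemma pseq_nonneg (hq : IsQMatrix q) (m : ℕ) (t : ℝ) (i j : ℕ) : 0 ≤ pseq q m t i j :=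
  ((pseq_basic hq m).1 t i j).1

lemma pseq_le_one (hq : IsQMatrix q) (m : ℕ) (t : ℝ) (i j : ℕ) : pseq q m t i j ≤ 1 :=
  ((pseq_basic hq m).1 t i j).2

lemma pseq_continuous (hq : IsQMatrix q) (m : ℕ) (i j : ℕ) :
    Continuous fun t => pseq q m t i j := (pseq_basic hq m).2 i j

lemma gf_pseq_continuous (hq : IsQMatrix q) (m : ℕ) (i j : ℕ) :
    Continuous (gf q (pseq q m) i j) :=
  gf_continuous hq (fun k => pseq_continuous hq m k j)
    (fun s k => pseq_nonneg hq m s k j) (fun s k => pseq_le_one hq m s k j)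

lemma pseq_mono (hq : IsQMatrix q) (m : ℕ) (t : ℝ) (i j : ℕ) :
    pseq q m t i j ≤ pseq q (m + 1) t i j := by
  induction m generalizing t i j with
  | zero =>
    rw [pseq_zero, pseq_succ]
    have := IK_nonneg (a := q i i) (pt_nonneg t) (G := gf q (pseq q 0) i j)
      (fun s _ => gf_nonneg hq (fun k => pseq_nonneg hq 0 s k j))
    linarith
  | succ m ih =>
    rw [pseq_succ, pseq_succ]
    have : IK (q i i) (pt t) (gf q (pseq q m) i j) ≤
        IK (q i i) (pt t) (gf q (pseq q (m+1)) i j) := by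
      refine IK_mono (pt_nonneg t) (fun s _ => ?_)
        (Continuous.intervalIntegrable
          ((Real.continuous_exp.comp (continuous_const.mul continuous_id)).mul
            (gf_pseq_continuous hq m i j)) 0 (pt t))
        (Continuous.intervalIntegrable
          ((Real.continuous_exp.comp (continuous_const.mul continuous_id)).mul
            (gf_pseq_continuous hq (m+1) i j)) 0 (pt t))
      exact gf_mono hq (fun k => pseq_nonneg hq m s k j) (fun k => ih s k j)
        (fun k => pseq_nonneg hq (m+1) s k j) (fun k => pseq_le_one hq (m+1) s k j)
    linarith

lemma pseq_mono_le (hq : IsQMatrix q) {m m' : ℕ} (h : m ≤ m') (t : ℝ) (i j : ℕ) :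
    pseq q m t i j ≤ pseq q m' t i j := by
  induction m', h using Nat.le_induction with
  | base => exact le_rfl
  | succ m' hm ih => exact ih.trans (pseq_mono hq m' t i j)

lemma pseq_zero_row (m : ℕ) {i : ℕ} (h : ∀ j, q i j = 0) (t : ℝ) (j : ℕ) :
    pseq q m t i j = if i = j then 1 else 0 := by
  induction m generalizing t j with
  | zero => simp [pseq_zero, h]
  | succ m ih =>
    rw [pseq_succ]
    have hG : gf q (pseq q m) i j = fun _ => 0 := by
      funext s
      have hz : ∀ k, offDiag q i k * pseq q m s k j = 0 := by
        intro k; unfold offDiag; split <;> simp [h]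
      simp only [gf, hz, tsum_zero]
    rw [hG]
    simp [IK, h]

end pseqBasic
section RowSums
variable {q : ℕ → ℕ → ℝ}

lemma exp_mul_cont {a : ℝ} {G : ℝ → ℝ} (hG : Continuous G) :
    Continuous fun s => Real.exp (-a * s) * G s :=
  (Real.continuous_exp.comp (continuous_const.mul continuous_id)).mul hG

lemma delta_sum_le (i : ℕ) (F : Finset ℕ) :
    (∑ j ∈ F, if i = j then (1:ℝ) else 0) ≤ 1 := by
  rw [Finset.sum_ite_eq]
  split <;> norm_num

lemma delta_sum_nonneg (i : ℕ) (F : Finset ℕ) :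
    0 ≤ (∑ j ∈ F, if i = j then (1:ℝ) else 0) :=
  Finset.sum_nonneg fun j _ => by positivity

lemma pseq_row_sum (hq : IsQMatrix q) (m : ℕ) (t : ℝ) (i : ℕ) (F : Finset ℕ) :
    (∑ j ∈ F, pseq q m t i j) ≤ 1 := by
  induction m generalizing t i F with
  | zero =>
    simp only [pseq_zero, ← Finset.sum_mul]
    calc (∑ j ∈ F, if i = j then (1:ℝ) else 0) * Real.exp (q i i * pt t)
        ≤ 1 * 1 := by
          refine mul_le_mul (delta_sum_le i F) ?_ (Real.exp_nonneg _) one_pos.le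
          exact Real.exp_le_one_iff.mpr
            (mul_nonpos_of_nonpos_of_nonneg (diag_nonpos hq i) (pt_nonneg t))
      _ = 1 := one_mul 1
  | succ m ih =>
    simp only [pseq_succ, Finset.sum_add_distrib, ← Finset.sum_mul]
    have hIKsum : (∑ j ∈ F, IK (q i i) (pt t) (gf q (pseq q m) i j)) =
        IK (q i i) (pt t) (fun s => ∑ j ∈ F, gf q (pseq q m) i j s) := by
      unfold IK
      rw [← Finset.mul_sum]
      congr 1
      rw [← intervalIntegral.integral_finset_sum]
      · exact intervalIntegral.integral_congr fun s _ => by rw [Finset.mul_sum]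
      · intro j _
        exact Continuous.intervalIntegrable (exp_mul_cont (gf_pseq_continuous hq m i j)) 0 (pt t)
    rw [hIKsum]
    have hGle : ∀ s, (∑ j ∈ F, gf q (pseq q m) i j s) ≤ -(q i i) := by
      intro s
      have hswap : (∑ j ∈ F, gf q (pseq q m) i j s) =
          ∑' k, ∑ j ∈ F, offDiag q i k * pseq q m s k j := by
        unfold gf
        rw [Summable.tsum_finsetSum]
        intro j _
        exact gf_summable hq (fun k => pseq_nonneg hq m s k j) (fun k => pseq_le_one hq m s k j)
      rw [hswap]
      have h1 : ∀ k, (∑ j ∈ F, offDiag q i k * pseq q m s k j) ≤ offDiag q i k := by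
        intro k
        rw [← Finset.mul_sum]
        calc offDiag q i k * (∑ j ∈ F, pseq q m s k j) ≤ offDiag q i k * 1 :=
              mul_le_mul_of_nonneg_left (ih s k F) (offDiag_nonneg hq i k)
          _ = offDiag q i k := mul_one _
      refine le_trans (Summable.tsum_le_tsum h1 ?_ (offDiag_summable hq i)) (offDiag_tsum_le hq i)
      refine Summable.of_nonneg_of_le (fun k => ?_) h1 (offDiag_summable hq i)
      exact Finset.sum_nonneg fun j _ =>
        mul_nonneg (offDiag_nonneg hq i k) (pseq_nonneg hq m s k j)
    have hIKle : IK (q i i) (pt t) (fun s => ∑ j ∈ F, gf q (pseq q m) i j s) ≤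
        1 - Real.exp (q i i * pt t) := by
      refine IK_le_of_le (diag_nonpos hq i) (pt_nonneg t) (fun s _ => hGle s) ?_
      refine Continuous.intervalIntegrable (exp_mul_cont ?_) 0 (pt t)
      exact continuous_finset_sum F fun j _ => gf_pseq_continuous hq m i j
    have hδ : (∑ j ∈ F, if i = j then (1:ℝ) else 0) * Real.exp (q i i * pt t) ≤
        Real.exp (q i i * pt t) := by
      calc _ ≤ 1 * Real.exp (q i i * pt t) :=
            mul_le_mul_of_nonneg_right (delta_sum_le i F) (Real.exp_nonneg _)
        _ = _ := one_mul _
    linarith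

lemma pseq_row_summable (hq : IsQMatrix q) (m : ℕ) (t : ℝ) (i : ℕ) :
    Summable (fun j => pseq q m t i j) :=
  summable_of_sum_le (fun j => pseq_nonneg hq m t i j) (fun F => pseq_row_sum hq m t i F)

end RowSums

/-- The minimal solution: pointwise supremum of the iterates. -/
noncomputable def pmin (q : ℕ → ℕ → ℝ) (t : ℝ) (i j : ℕ) : ℝ :=
  ⨆ m, pseq q m t i j

section Pmin
variable {q : ℕ → ℕ → ℝ}

lemma pseq_bddAbove (hq : IsQMatrix q) (t : ℝ) (i j : ℕ) :
    BddAbove (Set.range fun m => pseq q m t i j) := by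
  refine ⟨1, fun x hx => ?_⟩
  obtain ⟨m, rfl⟩ := hx
  exact pseq_le_one hq m t i j

lemma pseq_tendsto_pmin (hq : IsQMatrix q) (t : ℝ) (i j : ℕ) :
    Tendsto (fun m => pseq q m t i j) atTop (𝓝 (pmin q t i j)) :=
  tendsto_atTop_ciSup (fun _ _ h => pseq_mono_le hq h t i j) (pseq_bddAbove hq t i j)

lemma pseq_le_pmin (hq : IsQMatrix q) (m : ℕ) (t : ℝ) (i j : ℕ) :
    pseq q m t i j ≤ pmin q t i j :=
  le_ciSup (pseq_bddAbove hq t i j) m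

lemma pmin_nonneg (hq : IsQMatrix q) (t : ℝ) (i j : ℕ) : 0 ≤ pmin q t i j :=
  le_trans (pseq_nonneg hq 0 t i j) (pseq_le_pmin hq 0 t i j)

lemma pmin_le_one (hq : IsQMatrix q) (t : ℝ) (i j : ℕ) : pmin q t i j ≤ 1 :=
  ciSup_le fun m => pseq_le_one hq m t i j

lemma pmin_le_of_forall (hq : IsQMatrix q) {t : ℝ} {i j : ℕ} {c : ℝ}
    (h : ∀ m, pseq q m t i j ≤ c) : pmin q t i j ≤ c := ciSup_le h

lemma pmin_pt (q : ℕ → ℕ → ℝ) (t : ℝ) (i j : ℕ) : pmin q (pt t) i j = pmin q t i j := by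
  unfold pmin
  congr 1
  funext m
  exact pseq_pt q m t i j

lemma pseq_time_zero (q : ℕ → ℕ → ℝ) (m : ℕ) (i j : ℕ) :
    pseq q m 0 i j = if i = j then 1 else 0 := by
  have hpt : pt 0 = 0 := pt_eq le_rfl
  cases m with
  | zero => simp [pseq_zero, hpt]
  | succ m => simp [pseq_succ, hpt, IK]

lemma pmin_time_zero (i j : ℕ) :
    pmin q 0 i j = if i = j then 1 else 0 := by
  unfold pmin
  have : (fun m => pseq q m 0 i j) = fun _ => if i = j then (1:ℝ) else 0 := by
    funext m; exact pseq_time_zero q m i j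
  rw [this, ciSup_const]

lemma pmin_measurable (hq : IsQMatrix q) (i j : ℕ) :
    Measurable fun t => pmin q t i j :=
  measurable_of_tendsto_metrizable (fun m => (pseq_continuous hq m i j).measurable)
    (tendsto_pi_nhds.mpr fun t => pseq_tendsto_pmin hq t i j)

lemma gf_pmin_tendsto (hq : IsQMatrix q) (i j : ℕ) (s : ℝ) :
    Tendsto (fun m => gf q (pseq q m) i j s) atTop (𝓝 (gf q (pmin q) i j s)) := by
  refine tendsto_tsum_of_dominated_convergence (offDiag_summable hq i) (fun k => ?_) ?_
  · exact (pseq_tendsto_pmin hq s k j).const_mul _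
  · filter_upwards with m k
    rw [Real.norm_eq_abs, abs_mul, abs_of_nonneg (offDiag_nonneg hq i k),
      abs_of_nonneg (pseq_nonneg hq m s k j)]
    calc offDiag q i k * pseq q m s k j ≤ offDiag q i k * 1 :=
          mul_le_mul_of_nonneg_left (pseq_le_one hq m s k j) (offDiag_nonneg hq i k)
      _ = offDiag q i k := mul_one _

lemma gf_pmin_measurable (hq : IsQMatrix q) (i j : ℕ) :
    Measurable (gf q (pmin q) i j) :=
  measurable_of_tendsto_metrizable (fun m => (gf_pseq_continuous hq m i j).measurable)
    (tendsto_pi_nhds.mpr fun s => gf_pmin_tendsto hq i j s)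

lemma gf_pmin_nonneg (hq : IsQMatrix q) (i j : ℕ) (s : ℝ) : 0 ≤ gf q (pmin q) i j s :=
  gf_nonneg hq (fun k => pmin_nonneg hq s k j)

lemma gf_pmin_le (hq : IsQMatrix q) (i j : ℕ) (s : ℝ) : gf q (pmin q) i j s ≤ -(q i i) :=
  gf_le hq (fun k => pmin_nonneg hq s k j) (fun k => pmin_le_one hq s k j)

lemma gf_pmin_intervalIntegrable (hq : IsQMatrix q) (i j : ℕ) (a : ℝ) (u v : ℝ) :
    IntervalIntegrable (fun s => Real.exp (-a * s) * gf q (pmin q) i j s) volume u v := by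
  have hbint : IntervalIntegrable (fun s => Real.exp (-a * s) * (-(q i i))) volume u v :=
    Continuous.intervalIntegrable (by fun_prop) u v
  refine hbint.mono_fun ?_ ?_
  · exact ((Real.measurable_exp.comp (measurable_const.mul measurable_id)).mul
      (gf_pmin_measurable hq i j)).aestronglyMeasurable
  · filter_upwards with s
    have h1 : ‖Real.exp (-a * s) * gf q (pmin q) i j s‖ =
        Real.exp (-a * s) * gf q (pmin q) i j s := by
      rw [Real.norm_eq_abs,
        abs_of_nonneg (mul_nonneg (Real.exp_nonneg _) (gf_pmin_nonneg hq i j s))]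
    have h2 : ‖Real.exp (-a * s) * (-(q i i))‖ = Real.exp (-a * s) * (-(q i i)) := by
      rw [Real.norm_eq_abs, abs_of_nonneg
        (mul_nonneg (Real.exp_nonneg _) (neg_nonneg.mpr (diag_nonpos hq i)))]
    rw [h1, h2]
    exact mul_le_mul_of_nonneg_left (gf_pmin_le hq i j s) (Real.exp_nonneg _)

/-- Backward integral recursion for `pmin`. -/
lemma pmin_eq (hq : IsQMatrix q) (t : ℝ) (i j : ℕ) :
    pmin q t i j = (if i = j then 1 else 0) * Real.exp (q i i * pt t) +
      IK (q i i) (pt t) (gf q (pmin q) i j) := by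
  have h1 : Tendsto (fun m => pseq q (m + 1) t i j) atTop (𝓝 (pmin q t i j)) :=
    (pseq_tendsto_pmin hq t i j).comp (tendsto_add_atTop_nat 1)
  have h2 : Tendsto (fun m => pseq q (m + 1) t i j) atTop
      (𝓝 ((if i = j then 1 else 0) * Real.exp (q i i * pt t) +
        IK (q i i) (pt t) (gf q (pmin q) i j))) := by
    simp only [pseq_succ]
    refine tendsto_const_nhds.add ?_
    unfold IK
    refine Tendsto.const_mul _ ?_
    refine intervalIntegral.tendsto_integral_filter_of_dominated_convergence
      (fun s => Real.exp (-(q i i) * s) * (-(q i i))) ?_ ?_ ?_ ?_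
    · filter_upwards with m
      exact (exp_mul_cont (gf_pseq_continuous hq m i j)).aestronglyMeasurable
    · filter_upwards with m
      filter_upwards with s _
      rw [Real.norm_eq_abs, abs_mul, abs_of_nonneg (Real.exp_nonneg _),
        abs_of_nonneg (gf_nonneg hq (fun k => pseq_nonneg hq m s k j))]
      exact mul_le_mul_of_nonneg_left
        (gf_le hq (fun k => pseq_nonneg hq m s k j) (fun k => pseq_le_one hq m s k j))
        (Real.exp_nonneg _)
    · exact Continuous.intervalIntegrable (by fun_prop) 0 (pt t)
    · filter_upwards with s _
      exact (gf_pmin_tendsto hq i j s).const_mul _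
  exact tendsto_nhds_unique h1 h2

lemma pmin_backwardEq (hq : IsQMatrix q) : BackwardEq q (pmin q) := by
  intro t i j ht
  rw [pmin_eq hq t i j, pt_eq ht, IK_eq]
  congr 1
  refine intervalIntegral.integral_congr fun s _ => ?_
  rw [gf_eq_ite]

lemma pmin_row_sum (hq : IsQMatrix q) (t : ℝ) (i : ℕ) (F : Finset ℕ) :
    (∑ j ∈ F, pmin q t i j) ≤ 1 := by
  have h : Tendsto (fun m => ∑ j ∈ F, pseq q m t i j) atTop (𝓝 (∑ j ∈ F, pmin q t i j)) :=
    tendsto_finset_sum F fun j _ => pseq_tendsto_pmin hq t i j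
  exact le_of_tendsto h (Filter.Eventually.of_forall fun m => pseq_row_sum hq m t i F)

lemma pmin_row_summable (hq : IsQMatrix q) (t : ℝ) (i : ℕ) :
    Summable (fun j => pmin q t i j) :=
  summable_of_sum_le (fun j => pmin_nonneg hq t i j) (fun F => pmin_row_sum hq t i F)

lemma pmin_row_tsum_le (hq : IsQMatrix q) (t : ℝ) (i : ℕ) :
    (∑' j, pmin q t i j) ≤ 1 :=
  Summable.tsum_le_of_sum_le (pmin_row_summable hq t i) (fun F => pmin_row_sum hq t i F)

end Pmin
section CKHelpers
variable {q : ℕ → ℕ → ℝ}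

lemma II_of_meas_bdd {G : ℝ → ℝ} (hG : Measurable G) {C : ℝ} (h0 : ∀ s, 0 ≤ G s)
    (hle : ∀ s, G s ≤ C) (a u v : ℝ) :
    IntervalIntegrable (fun s => Real.exp (-a * s) * G s) volume u v := by
  have hbint : IntervalIntegrable (fun s => Real.exp (-a * s) * C) volume u v :=
    Continuous.intervalIntegrable (by fun_prop) u v
  refine hbint.mono_fun ?_ ?_
  · exact ((Real.measurable_exp.comp (measurable_const.mul measurable_id)).mul
      hG).aestronglyMeasurable
  · filter_upwards with s
    have hC : 0 ≤ C := le_trans (h0 s) (hle s)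
    rw [Real.norm_eq_abs, Real.norm_eq_abs,
      abs_of_nonneg (mul_nonneg (Real.exp_nonneg _) (h0 s)),
      abs_of_nonneg (mul_nonneg (Real.exp_nonneg _) hC)]
    exact mul_le_mul_of_nonneg_left (hle s) (Real.exp_nonneg _)

lemma IK_split (a : ℝ) {t s : ℝ} (_ht : 0 ≤ t) (_hs : 0 ≤ s) {G : ℝ → ℝ}
    (hG : ∀ u v : ℝ, IntervalIntegrable (fun x => Real.exp (-a * x) * G x) volume u v) :
    IK a (t + s) G = Real.exp (a * t) * IK a s G + IK a t (fun v => G (s + v)) := by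
  unfold IK
  rw [← intervalIntegral.integral_add_adjacent_intervals (a := (0:ℝ)) (b := s) (c := t + s)
    (hG 0 s) (hG s (t + s))]
  have h2 : (∫ x in s..(t+s), Real.exp (-a * x) * G x) =
      Real.exp (-a * s) * ∫ v in (0:ℝ)..t, Real.exp (-a * v) * G (s + v) := by
    rw [← intervalIntegral.integral_const_mul]
    have h3 := intervalIntegral.integral_comp_add_right (a := (0:ℝ)) (b := t)
      (fun x => Real.exp (-a * x) * G x) s
    rw [zero_add] at h3
    rw [← h3]
    refine intervalIntegral.integral_congr fun v _ => ?_
    show Real.exp (-a * (v + s)) * G (v + s) = Real.exp (-a * s) * (Real.exp (-a * v) * G (s + v))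
    rw [← mul_assoc, ← Real.exp_add, add_comm s v]
    ring_nf
  rw [h2]
  have e1 : Real.exp (a * (t + s)) = Real.exp (a * t) * Real.exp (a * s) := by
    rw [← Real.exp_add]; ring_nf
  have e2 : Real.exp (a * s) * Real.exp (-a * s) = 1 := by
    have h0 : a * s + -a * s = 0 := by ring
    rw [← Real.exp_add, h0, Real.exp_zero]
  rw [e1, mul_add]
  have : Real.exp (a * t) * Real.exp (a * s) *
      (Real.exp (-a * s) * ∫ v in (0:ℝ)..t, Real.exp (-a * v) * G (s + v)) =
      Real.exp (a * t) * ((Real.exp (a * s) * Real.exp (-a * s)) *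
        ∫ v in (0:ℝ)..t, Real.exp (-a * v) * G (s + v)) := by ring
  rw [this, e2, one_mul]
  ring

lemma pmin_shift (hq : IsQMatrix q) {t s : ℝ} (ht : 0 ≤ t) (hs : 0 ≤ s) (i j : ℕ) :
    pmin q (t + s) i j = Real.exp (q i i * t) * pmin q s i j +
      IK (q i i) t (fun v => gf q (pmin q) i j (s + v)) := by
  have h := pmin_eq hq (t + s) i j
  rw [pt_eq (add_nonneg ht hs)] at h
  rw [h, IK_split (q i i) ht hs (fun u v => gf_pmin_intervalIntegrable hq i j _ u v),
    pmin_eq hq s i j, pt_eq hs, mul_add, Real.exp_add]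
  ring

lemma pseq_shift (hq : IsQMatrix q) (m : ℕ) {t s : ℝ} (ht : 0 ≤ t) (hs : 0 ≤ s) (i j : ℕ) :
    pseq q (m + 1) (t + s) i j = Real.exp (q i i * t) * pseq q (m + 1) s i j +
      IK (q i i) t (fun v => gf q (pseq q m) i j (s + v)) := by
  rw [pseq_succ, pseq_succ, pt_eq (add_nonneg ht hs), pt_eq hs,
    IK_split (q i i) ht hs (fun u v => Continuous.intervalIntegrable
      (exp_mul_cont (gf_pseq_continuous hq m i j)) u v), mul_add, Real.exp_add]
  ring

lemma summable_of_prod_sum_le {T : ℕ × ℕ → ℝ} {C : ℝ} (h0 : ∀ p, 0 ≤ T p)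
    (h : ∀ F1 F2 : Finset ℕ, (∑ p ∈ F1 ×ˢ F2, T p) ≤ C) : Summable T := by
  refine summable_of_sum_le (c := C) (fun p => h0 p) (fun G => ?_)
  refine le_trans (Finset.sum_le_sum_of_subset_of_nonneg ?_ (fun p _ _ => h0 p))
    (h (G.image Prod.fst) (G.image Prod.snd))
  intro p hp
  rw [Finset.mem_product]
  exact ⟨Finset.mem_image_of_mem _ hp, Finset.mem_image_of_mem _ hp⟩

lemma measurable_tsum' {f : ℕ → ℝ → ℝ} (hf : ∀ k, Measurable (f k))
    (hsum : ∀ v, Summable (fun k => f k v)) : Measurable fun v => ∑' k, f k v := by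
  refine measurable_of_tendsto_metrizable
    (f := fun n v => ∑ k ∈ Finset.range n, f k v)
    (fun n => Finset.measurable_sum _ fun k _ => hf k) ?_
  exact tendsto_pi_nhds.mpr fun v => (hsum v).hasSum.tendsto_sum_nat

lemma IK_mul_const (a t : ℝ) (G : ℝ → ℝ) (r : ℝ) :
    IK a t G * r = IK a t (fun v => G v * r) := by
  unfold IK
  rw [mul_assoc, ← intervalIntegral.integral_mul_const]
  congr 1
  exact intervalIntegral.integral_congr fun v _ => by ring

lemma IK_finsum (a t : ℝ) (G : ℕ → ℝ → ℝ) (F : Finset ℕ)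
    (hInt : ∀ k ∈ F, IntervalIntegrable (fun v => Real.exp (-a * v) * G k v) volume 0 t) :
    (∑ k ∈ F, IK a t (G k)) = IK a t (fun v => ∑ k ∈ F, G k v) := by
  unfold IK
  rw [← Finset.mul_sum]
  congr 1
  rw [← intervalIntegral.integral_finset_sum hInt]
  exact intervalIntegral.integral_congr fun v _ => by rw [Finset.mul_sum]

end CKHelpers
section SumRec
variable {q : ℕ → ℕ → ℝ}

/-- Key interchange lemma: if row `i` of `W` satisfies the backward recursion step with
inner function `V`, then the `c`-weighted row sums of `W` satisfy the analogous recursion. -/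
lemma sum_recursion (hq : IsQMatrix q) {V W : ℝ → ℕ → ℕ → ℝ} {i : ℕ} {c : ℕ → ℝ}
    (hc0 : ∀ k, 0 ≤ c k) (hc1 : ∀ k, c k ≤ 1)
    (hV0 : ∀ v l k, 0 ≤ V v l k) (hVrowF : ∀ v l (F : Finset ℕ), (∑ k ∈ F, V v l k) ≤ 1)
    (hVmeas : ∀ k, Measurable (gf q V i k))
    (hW : ∀ t, 0 ≤ t → ∀ k, W t i k = (if i = k then 1 else 0) * Real.exp (q i i * t) +
      IK (q i i) t (gf q V i k))
    {t : ℝ} (ht : 0 ≤ t) :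
    (∑' k, W t i k * c k) = Real.exp (q i i * t) * c i +
      IK (q i i) t (fun v => ∑' l, offDiag q i l * (∑' k, V v l k * c k)) := by
  set a := q i i with ha
  have hneg : a ≤ 0 := diag_nonpos hq i
  have hV1 : ∀ v l k, V v l k ≤ 1 := by
    intro v l k
    have := hVrowF v l {k}
    simpa using this
  have hgf0 : ∀ k v, 0 ≤ gf q V i k v := fun k v => gf_nonneg hq (fun l => hV0 v l k)
  have hgfle : ∀ k v, gf q V i k v ≤ -a := fun k v =>
    gf_le hq (fun l => hV0 v l k) (fun l => hV1 v l k)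
  have hII : ∀ k, ∀ u w : ℝ,
      IntervalIntegrable (fun v => Real.exp (-a * v) * gf q V i k v) volume u w :=
    fun k u w => II_of_meas_bdd (hVmeas k) (hgf0 k) (hgfle k) a u w
  have h1 : ∀ v k, gf q V i k v * c k = ∑' l, offDiag q i l * V v l k * c k := by
    intro v k
    rw [gf, tsum_mul_right]
  have hsum1 : ∀ v k, Summable (fun l => offDiag q i l * V v l k * c k) := by
    intro v k
    refine Summable.of_nonneg_of_le (fun l => ?_) (fun l => ?_) (offDiag_summable hq i)
    · exact mul_nonneg (mul_nonneg (offDiag_nonneg hq i l) (hV0 v l k)) (hc0 k)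
    · calc offDiag q i l * V v l k * c k ≤ offDiag q i l * 1 * 1 := by
            refine mul_le_mul (mul_le_mul_of_nonneg_left (hV1 v l k)
              (offDiag_nonneg hq i l)) (hc1 k) (hc0 k) ?_
            exact mul_nonneg (offDiag_nonneg hq i l) zero_le_one
        _ = offDiag q i l := by ring
  have hble : ∀ v l (F : Finset ℕ), (∑ k ∈ F, offDiag q i l * V v l k * c k) ≤
      offDiag q i l := by
    intro v l F
    have heq : (∑ k ∈ F, offDiag q i l * V v l k * c k) =
        offDiag q i l * ∑ k ∈ F, V v l k * c k := by
      rw [Finset.mul_sum]; exact Finset.sum_congr rfl fun k _ => by ring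
    rw [heq]
    calc offDiag q i l * ∑ k ∈ F, V v l k * c k ≤ offDiag q i l * 1 := by
          refine mul_le_mul_of_nonneg_left ?_ (offDiag_nonneg hq i l)
          calc (∑ k ∈ F, V v l k * c k) ≤ ∑ k ∈ F, V v l k :=
                Finset.sum_le_sum fun k _ => by
                  calc V v l k * c k ≤ V v l k * 1 :=
                        mul_le_mul_of_nonneg_left (hc1 k) (hV0 v l k)
                    _ = V v l k := mul_one _
            _ ≤ 1 := hVrowF v l F
      _ = offDiag q i l := mul_one _
  have hsumF : ∀ v (F : Finset ℕ), (∑ k ∈ F, gf q V i k v * c k) ≤ -a := by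
    intro v F
    calc (∑ k ∈ F, gf q V i k v * c k) = ∑ k ∈ F, ∑' l, offDiag q i l * V v l k * c k :=
          Finset.sum_congr rfl fun k _ => h1 v k
      _ = ∑' l, ∑ k ∈ F, offDiag q i l * V v l k * c k := (Summable.tsum_finsetSum fun k _ => hsum1 v k).symm
      _ ≤ ∑' l, offDiag q i l := by
          refine Summable.tsum_le_tsum (fun l => hble v l F) ?_ (offDiag_summable hq i)
          refine Summable.of_nonneg_of_le (fun l => Finset.sum_nonneg fun k _ =>
            mul_nonneg (mul_nonneg (offDiag_nonneg hq i l) (hV0 v l k)) (hc0 k))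
            (fun l => hble v l F) (offDiag_summable hq i)
      _ ≤ -a := offDiag_tsum_le hq i
  -- swap of the two infinite sums
  have hswap : ∀ v, (∑' k, gf q V i k v * c k) =
      ∑' l, offDiag q i l * (∑' k, V v l k * c k) := by
    intro v
    have hunc : Summable (Function.uncurry fun l k => offDiag q i l * V v l k * c k) := by
      refine summable_of_prod_sum_le (C := -a) (fun p => mul_nonneg (mul_nonneg
        (offDiag_nonneg hq i p.1) (hV0 v p.1 p.2)) (hc0 p.2)) (fun F1 F2 => ?_)
      rw [Finset.sum_product]
      calc (∑ l ∈ F1, ∑ k ∈ F2, offDiag q i l * V v l k * c k)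
          ≤ ∑ l ∈ F1, offDiag q i l := Finset.sum_le_sum fun l _ => hble v l F2
        _ ≤ ∑' l, offDiag q i l :=
            Summable.sum_le_tsum F1 (fun l _ => offDiag_nonneg hq i l) (offDiag_summable hq i)
        _ ≤ -a := offDiag_tsum_le hq i
    have hc2 : ∀ l, Summable (fun k => offDiag q i l * V v l k * c k) := by
      intro l
      have hVs : Summable (fun k => V v l k) :=
        summable_of_sum_le (fun k => hV0 v l k) (fun F => hVrowF v l F)
      refine Summable.of_nonneg_of_le (fun k => mul_nonneg (mul_nonneg
        (offDiag_nonneg hq i l) (hV0 v l k)) (hc0 k)) (fun k => ?_)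
        (hVs.mul_left (offDiag q i l))
      calc offDiag q i l * V v l k * c k ≤ offDiag q i l * V v l k * 1 :=
            mul_le_mul_of_nonneg_left (hc1 k)
              (mul_nonneg (offDiag_nonneg hq i l) (hV0 v l k))
        _ = offDiag q i l * V v l k := mul_one _
    calc (∑' k, gf q V i k v * c k) = ∑' k, ∑' l, offDiag q i l * V v l k * c k :=
          tsum_congr fun k => h1 v k
      _ = ∑' l, ∑' k, offDiag q i l * V v l k * c k :=
          Summable.tsum_comm' hunc hc2 (fun k => hsum1 v k)
      _ = ∑' l, offDiag q i l * (∑' k, V v l k * c k) := by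
          refine tsum_congr fun l => ?_
          rw [← tsum_mul_left]
          exact tsum_congr fun k => by ring
  -- the δ-part and summability facts
  have hIK0 : ∀ k, 0 ≤ IK a t (gf q V i k) := fun k =>
    IK_nonneg ht (fun v _ => hgf0 k v)
  have hIKle1 : ∀ k, IK a t (gf q V i k) ≤ 1 := by
    intro k
    have h := IK_le_of_le hneg ht (fun v _ => hgfle k v) (hII k 0 t)
    have := Real.exp_nonneg (a * t)
    linarith
  have hS1 : Summable (fun k => ((if i = k then 1 else 0) * Real.exp (a * t)) * c k) := by
    refine summable_of_ne_finset_zero (s := {i}) (fun k hk => ?_)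
    rw [Finset.mem_singleton] at hk
    rw [if_neg (fun h => hk h.symm)]
    ring
  have hS2 : Summable (fun k => IK a t (gf q V i k) * c k) := by
    refine summable_of_sum_le (c := 1) (fun k => mul_nonneg (hIK0 k) (hc0 k)) (fun G => ?_)
    have hIIc : ∀ k, IntervalIntegrable
        (fun v => Real.exp (-a * v) * (gf q V i k v * c k)) volume 0 t := by
      intro k
      have := (hII k 0 t).mul_const (c k)
      simpa [mul_assoc] using this
    have heq : (∑ k ∈ G, IK a t (gf q V i k) * c k) =
        IK a t (fun v => ∑ k ∈ G, gf q V i k v * c k) := by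
      rw [Finset.sum_congr rfl (fun k _ => IK_mul_const a t (gf q V i k) (c k)),
        IK_finsum a t _ G (fun k _ => hIIc k)]
    rw [heq]
    have hint : IntervalIntegrable
        (fun v => Real.exp (-a * v) * ∑ k ∈ G, gf q V i k v * c k) volume 0 t := by
      have he : (fun v => Real.exp (-a * v) * ∑ k ∈ G, gf q V i k v * c k) =
          fun v => ∑ k ∈ G, Real.exp (-a * v) * (gf q V i k v * c k) := by
        funext v; rw [Finset.mul_sum]
      rw [he]
      have h2 := IntervalIntegrable.sum G (fun k _ => hIIc k)
      have heq2 : (∑ k ∈ G, fun v => Real.exp (-a * v) * (gf q V i k v * c k)) =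
          fun v => ∑ k ∈ G, Real.exp (-a * v) * (gf q V i k v * c k) := by
        funext v; simp
      rwa [heq2] at h2
    have h := IK_le_of_le hneg ht (fun v _ => hsumF v G) hint
    have := Real.exp_nonneg (a * t)
    linarith
  -- the interchange of tsum and integral
  set μ := volume.restrict (Set.Ioc (0:ℝ) t) with hμ
  set C0 := Real.exp (|a| * t) * (-a) with hC0
  have hC0nn : 0 ≤ C0 := mul_nonneg (Real.exp_nonneg _) (neg_nonneg.mpr hneg)
  set F : ℕ → ℝ → ℝ := fun k v => (Real.exp (-a * v) * gf q V i k v) * c k with hF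
  have hexpb : ∀ v ∈ Set.Ioc (0:ℝ) t, Real.exp (-a * v) ≤ Real.exp (|a| * t) := by
    intro v hv
    refine Real.exp_le_exp.mpr ?_
    calc -a * v ≤ |a| * v := mul_le_mul_of_nonneg_right (neg_le_abs a) hv.1.le
      _ ≤ |a| * t := mul_le_mul_of_nonneg_left hv.2 (abs_nonneg a)
  have hFnn : ∀ k v, 0 ≤ F k v := fun k v =>
    mul_nonneg (mul_nonneg (Real.exp_nonneg _) (hgf0 k v)) (hc0 k)
  have hFbd : ∀ k, ∀ v ∈ Set.Ioc (0:ℝ) t, F k v ≤ C0 * c k := by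
    intro k v hv
    calc F k v ≤ (Real.exp (|a| * t) * (-a)) * c k := by
          refine mul_le_mul_of_nonneg_right ?_ (hc0 k)
          exact mul_le_mul (hexpb v hv) (hgfle k v) (hgf0 k v) (Real.exp_nonneg _)
      _ = C0 * c k := rfl
  have hFmeas : ∀ k, Measurable (F k) := fun k =>
    (((Real.measurable_exp.comp (measurable_const.mul measurable_id)).mul
      (hVmeas k)).mul measurable_const)
  have hFint : ∀ k, Integrable (F k) μ := by
    intro k
    refine Integrable.mono' (g := fun _ => C0 * c k) ?_ (hFmeas k).aestronglyMeasurable ?_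
    · exact integrableOn_const measure_Ioc_lt_top.ne
    · rw [hμ, ae_restrict_iff' measurableSet_Ioc]
      filter_upwards with v hv
      rw [Real.norm_eq_abs, abs_of_nonneg (hFnn k v)]
      exact hFbd k v hv
  have hvol : (volume (Set.Ioc (0:ℝ) t)).toReal = t := by
    rw [Real.volume_Ioc, sub_zero, ENNReal.toReal_ofReal ht]
  have hFsumint : Summable (fun k => ∫ v, ‖F k v‖ ∂μ) := by
    refine summable_of_sum_le (c := C0 * t) (fun k =>
      integral_nonneg fun v => norm_nonneg _) (fun G => ?_)
    have heq : (∑ k ∈ G, ∫ v, ‖F k v‖ ∂μ) = ∫ v, ∑ k ∈ G, ‖F k v‖ ∂μ :=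
      (integral_finset_sum G fun k _ => (hFint k).norm).symm
    rw [heq]
    have hle : ∀ᵐ v ∂μ, (∑ k ∈ G, ‖F k v‖) ≤ C0 := by
      rw [hμ, ae_restrict_iff' measurableSet_Ioc]
      filter_upwards with v hv
      have he : (∑ k ∈ G, ‖F k v‖) = Real.exp (-a * v) * ∑ k ∈ G, gf q V i k v * c k := by
        rw [Finset.mul_sum]
        refine Finset.sum_congr rfl fun k _ => ?_
        rw [Real.norm_eq_abs, abs_of_nonneg (hFnn k v), hF]
        ring
      rw [he]
      calc Real.exp (-a * v) * ∑ k ∈ G, gf q V i k v * c k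
          ≤ Real.exp (|a| * t) * (-a) := by
            refine mul_le_mul (hexpb v hv) (hsumF v G) ?_ (Real.exp_nonneg _)
            exact Finset.sum_nonneg fun k _ => mul_nonneg (hgf0 k v) (hc0 k)
        _ = C0 := rfl
    calc (∫ v, ∑ k ∈ G, ‖F k v‖ ∂μ) ≤ ∫ _, C0 ∂μ := by
          refine integral_mono_ae (integrable_finset_sum G fun k _ => (hFint k).norm)
            (integrableOn_const measure_Ioc_lt_top.ne) hle
      _ = C0 * t := by rw [integral_const, hμ, measureReal_def, Measure.restrict_apply_univ, hvol, smul_eq_mul,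
            mul_comm]
  have hkey := MeasureTheory.integral_tsum_of_summable_integral_norm hFint hFsumint
  -- assemble everything
  have hdelta : (∑' k, ((if i = k then 1 else 0) * Real.exp (a * t)) * c k) =
      Real.exp (a * t) * c i := by
    rw [tsum_eq_single i (fun k hk => by rw [if_neg (fun h => hk h.symm)]; ring)]
    rw [if_pos rfl]; ring
  have hT2 : (∑' k, IK a t (gf q V i k) * c k) =
      IK a t (fun v => ∑' l, offDiag q i l * (∑' k, V v l k * c k)) := by
    have e1 : (∑' k, IK a t (gf q V i k) * c k) =
        Real.exp (a * t) * ∑' k, ∫ v, F k v ∂μ := by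
      rw [← tsum_mul_left]
      refine tsum_congr fun k => ?_
      unfold IK
      rw [intervalIntegral.integral_of_le ht]
      have : (∫ v in Set.Ioc (0:ℝ) t, Real.exp (-a * v) * gf q V i k v) * c k =
          ∫ v in Set.Ioc (0:ℝ) t, (Real.exp (-a * v) * gf q V i k v) * c k := by
        rw [← integral_mul_const]
      rw [mul_assoc, this]
    rw [e1, hkey]
    unfold IK
    congr 1
    rw [intervalIntegral.integral_of_le ht]
    refine integral_congr_ae (Filter.Eventually.of_forall fun v => ?_)
    show (∑' k, F k v) = Real.exp (-a * v) * ∑' l, offDiag q i l * (∑' k, V v l k * c k)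
    rw [← hswap v, ← tsum_mul_left]
    refine tsum_congr fun k => ?_
    simp only [hF]
    ring
  calc (∑' k, W t i k * c k)
      = ∑' k, (((if i = k then 1 else 0) * Real.exp (a * t)) * c k +
          IK a t (gf q V i k) * c k) := tsum_congr fun k => by rw [hW t ht k]; ring
    _ = (∑' k, ((if i = k then 1 else 0) * Real.exp (a * t)) * c k) +
        ∑' k, IK a t (gf q V i k) * c k := Summable.tsum_add hS1 hS2
    _ = Real.exp (a * t) * c i +
        IK a t (fun v => ∑' l, offDiag q i l * (∑' k, V v l k * c k)) := by
        rw [hdelta, hT2]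

end SumRec
section CK
variable {q : ℕ → ℕ → ℝ}

lemma pseq_row_tsum_le (hq : IsQMatrix q) (m : ℕ) (t : ℝ) (i : ℕ) :
    (∑' k, pseq q m t i k) ≤ 1 :=
  Summable.tsum_le_of_sum_le (pseq_row_summable hq m t i) (fun F => pseq_row_sum hq m t i F)

lemma Sp_summable (hq : IsQMatrix q) (m : ℕ) (v : ℝ) (l : ℕ) (c : ℕ → ℝ)
    (hc0 : ∀ k, 0 ≤ c k) (hc1 : ∀ k, c k ≤ 1) :
    Summable (fun k => pseq q m v l k * c k) := by
  refine Summable.of_nonneg_of_le (fun k => mul_nonneg (pseq_nonneg hq m v l k) (hc0 k))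
    (fun k => ?_) (pseq_row_summable hq m v l)
  calc pseq q m v l k * c k ≤ pseq q m v l k * 1 :=
        mul_le_mul_of_nonneg_left (hc1 k) (pseq_nonneg hq m v l k)
    _ = pseq q m v l k := mul_one _

lemma Sp_le_one (hq : IsQMatrix q) (m : ℕ) (v : ℝ) (l : ℕ) (c : ℕ → ℝ)
    (hc0 : ∀ k, 0 ≤ c k) (hc1 : ∀ k, c k ≤ 1) :
    (∑' k, pseq q m v l k * c k) ≤ 1 := by
  refine le_trans (Summable.tsum_le_tsum (fun k => ?_) (Sp_summable hq m v l c hc0 hc1)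
    (pseq_row_summable hq m v l)) (pseq_row_tsum_le hq m v l)
  calc pseq q m v l k * c k ≤ pseq q m v l k * 1 :=
        mul_le_mul_of_nonneg_left (hc1 k) (pseq_nonneg hq m v l k)
    _ = pseq q m v l k := mul_one _

lemma Sp_nonneg (hq : IsQMatrix q) (m : ℕ) (v : ℝ) (l : ℕ) (c : ℕ → ℝ)
    (hc0 : ∀ k, 0 ≤ c k) : 0 ≤ ∑' k, pseq q m v l k * c k :=
  tsum_nonneg fun k => mul_nonneg (pseq_nonneg hq m v l k) (hc0 k)

lemma U_summable (hq : IsQMatrix q) (v : ℝ) (l : ℕ) (c : ℕ → ℝ)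
    (hc0 : ∀ k, 0 ≤ c k) (hc1 : ∀ k, c k ≤ 1) :
    Summable (fun k => pmin q v l k * c k) := by
  refine Summable.of_nonneg_of_le (fun k => mul_nonneg (pmin_nonneg hq v l k) (hc0 k))
    (fun k => ?_) (pmin_row_summable hq v l)
  calc pmin q v l k * c k ≤ pmin q v l k * 1 :=
        mul_le_mul_of_nonneg_left (hc1 k) (pmin_nonneg hq v l k)
    _ = pmin q v l k := mul_one _

lemma U_le_one (hq : IsQMatrix q) (v : ℝ) (l : ℕ) (c : ℕ → ℝ)
    (hc0 : ∀ k, 0 ≤ c k) (hc1 : ∀ k, c k ≤ 1) :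
    (∑' k, pmin q v l k * c k) ≤ 1 := by
  refine le_trans (Summable.tsum_le_tsum (fun k => ?_) (U_summable hq v l c hc0 hc1)
    (pmin_row_summable hq v l)) (pmin_row_tsum_le hq v l)
  calc pmin q v l k * c k ≤ pmin q v l k * 1 :=
        mul_le_mul_of_nonneg_left (hc1 k) (pmin_nonneg hq v l k)
    _ = pmin q v l k := mul_one _

lemma U_nonneg (hq : IsQMatrix q) (v : ℝ) (l : ℕ) (c : ℕ → ℝ)
    (hc0 : ∀ k, 0 ≤ c k) : 0 ≤ ∑' k, pmin q v l k * c k :=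
  tsum_nonneg fun k => mul_nonneg (pmin_nonneg hq v l k) (hc0 k)

/-- The weighted inner sums `v ↦ ∑_l offd i l * (∑_k V v l k * c k)`: bounds and integrability,
for `V = pseq` and `V = pmin`. -/
lemma X_II_pseq (hq : IsQMatrix q) (m : ℕ) (i : ℕ) (c : ℕ → ℝ)
    (hc0 : ∀ k, 0 ≤ c k) (hc1 : ∀ k, c k ≤ 1) (a u w : ℝ) :
    IntervalIntegrable (fun v => Real.exp (-a * v) *
      ∑' l, offDiag q i l * (∑' k, pseq q m v l k * c k)) volume u w := by
  have hterm : ∀ v l, offDiag q i l * (∑' k, pseq q m v l k * c k) ≤ offDiag q i l := by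
    intro v l
    calc offDiag q i l * (∑' k, pseq q m v l k * c k) ≤ offDiag q i l * 1 :=
          mul_le_mul_of_nonneg_left (Sp_le_one hq m v l c hc0 hc1) (offDiag_nonneg hq i l)
      _ = offDiag q i l := mul_one _
  have hterm0 : ∀ v l, 0 ≤ offDiag q i l * (∑' k, pseq q m v l k * c k) := fun v l =>
    mul_nonneg (offDiag_nonneg hq i l) (Sp_nonneg hq m v l c hc0)
  have hsummable : ∀ v, Summable (fun l => offDiag q i l * (∑' k, pseq q m v l k * c k)) :=
    fun v => Summable.of_nonneg_of_le (hterm0 v) (hterm v) (offDiag_summable hq i)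
  refine II_of_meas_bdd (C := -(q i i)) ?_ (fun v => tsum_nonneg (hterm0 v)) (fun v => ?_) a u w
  · refine measurable_tsum' (fun l => ?_) hsummable
    refine Measurable.const_mul ?_ _
    exact measurable_tsum' (fun k => ((pseq_continuous hq m l k).measurable.mul_const _))
      (fun v => Sp_summable hq m v l c hc0 hc1)
  · exact le_trans (Summable.tsum_le_tsum (hterm v) (hsummable v) (offDiag_summable hq i))
      (offDiag_tsum_le hq i)

lemma X_II_pmin (hq : IsQMatrix q) (i : ℕ) (c : ℕ → ℝ)
    (hc0 : ∀ k, 0 ≤ c k) (hc1 : ∀ k, c k ≤ 1) (a u w : ℝ) :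
    IntervalIntegrable (fun v => Real.exp (-a * v) *
      ∑' l, offDiag q i l * (∑' k, pmin q v l k * c k)) volume u w := by
  have hterm : ∀ v l, offDiag q i l * (∑' k, pmin q v l k * c k) ≤ offDiag q i l := by
    intro v l
    calc offDiag q i l * (∑' k, pmin q v l k * c k) ≤ offDiag q i l * 1 :=
          mul_le_mul_of_nonneg_left (U_le_one hq v l c hc0 hc1) (offDiag_nonneg hq i l)
      _ = offDiag q i l := mul_one _
  have hterm0 : ∀ v l, 0 ≤ offDiag q i l * (∑' k, pmin q v l k * c k) := fun v l =>
    mul_nonneg (offDiag_nonneg hq i l) (U_nonneg hq v l c hc0)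
  have hsummable : ∀ v, Summable (fun l => offDiag q i l * (∑' k, pmin q v l k * c k)) :=
    fun v => Summable.of_nonneg_of_le (hterm0 v) (hterm v) (offDiag_summable hq i)
  refine II_of_meas_bdd (C := -(q i i)) ?_ (fun v => tsum_nonneg (hterm0 v)) (fun v => ?_) a u w
  · refine measurable_tsum' (fun l => ?_) hsummable
    refine Measurable.const_mul ?_ _
    exact measurable_tsum' (fun k => ((pmin_measurable hq l k).mul_const _))
      (fun v => U_summable hq v l c hc0 hc1)
  · exact le_trans (Summable.tsum_le_tsum (hterm v) (hsummable v) (offDiag_summable hq i))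
      (offDiag_tsum_le hq i)
lemma ck_aux1 (hq : IsQMatrix q) {s : ℝ} (hs : 0 ≤ s) (j : ℕ) :
    ∀ m, ∀ i, ∀ t : ℝ, 0 ≤ t →
      (∑' k, pseq q m t i k * pmin q s k j) ≤ pmin q (t + s) i j := by
  have hc0 : ∀ k, 0 ≤ pmin q s k j := fun k => pmin_nonneg hq s k j
  have hc1 : ∀ k, pmin q s k j ≤ 1 := fun k => pmin_le_one hq s k j
  intro m
  induction m with
  | zero =>
    intro i t ht
    have h0 : (∑' k, pseq q 0 t i k * pmin q s k j) =
        Real.exp (q i i * t) * pmin q s i j := by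
      rw [tsum_eq_single i (fun k hk => by
        rw [pseq_zero, if_neg (fun h => hk h.symm)]; ring)]
      rw [pseq_zero, if_pos rfl, pt_eq ht]; ring
    rw [h0, pmin_shift hq ht hs i j]
    have h1 : 0 ≤ IK (q i i) t (fun v => gf q (pmin q) i j (s + v)) :=
      IK_nonneg ht (fun v _ => gf_pmin_nonneg hq i j (s + v))
    linarith
  | succ m ih =>
    intro i t ht
    have hrec := sum_recursion hq (V := pseq q m) (W := pseq q (m+1))
      (c := fun k => pmin q s k j) hc0 hc1
      (fun v l k => pseq_nonneg hq m v l k) (fun v l F => pseq_row_sum hq m v l F)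
      (fun k => (gf_pseq_continuous hq m i k).measurable)
      (fun t' ht' k => by rw [pseq_succ, pt_eq ht']) ht
    rw [hrec, pmin_shift hq ht hs i j]
    refine add_le_add_right ?_ _
    refine IK_mono ht (fun v hv => ?_) (X_II_pseq hq m i _ hc0 hc1 _ 0 t)
      (II_of_meas_bdd (C := -(q i i))
        ((gf_pmin_measurable hq i j).comp (measurable_const.add measurable_id))
        (fun v => gf_pmin_nonneg hq i j (s + v)) (fun v => gf_pmin_le hq i j (s + v)) _ 0 t)
    -- pointwise comparison of the integrands
    unfold gf
    refine Summable.tsum_le_tsum (fun l => ?_) ?_ ?_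
    · refine mul_le_mul_of_nonneg_left ?_ (offDiag_nonneg hq i l)
      have := ih l v hv.1
      rwa [add_comm v s] at this
    · refine Summable.of_nonneg_of_le (fun l => mul_nonneg (offDiag_nonneg hq i l)
        (Sp_nonneg hq m v l _ hc0)) (fun l => ?_) (offDiag_summable hq i)
      calc offDiag q i l * (∑' k, pseq q m v l k * pmin q s k j) ≤ offDiag q i l * 1 :=
            mul_le_mul_of_nonneg_left (Sp_le_one hq m v l _ hc0 hc1) (offDiag_nonneg hq i l)
        _ = offDiag q i l := mul_one _
    · refine Summable.of_nonneg_of_le (fun l => mul_nonneg (offDiag_nonneg hq i l)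
        (pmin_nonneg hq (s + v) l j)) (fun l => ?_) (offDiag_summable hq i)
      calc offDiag q i l * pmin q (s + v) l j ≤ offDiag q i l * 1 :=
            mul_le_mul_of_nonneg_left (pmin_le_one hq (s + v) l j) (offDiag_nonneg hq i l)
        _ = offDiag q i l := mul_one _

lemma ck_upper (hq : IsQMatrix q) {t s : ℝ} (ht : 0 ≤ t) (hs : 0 ≤ s) (i j : ℕ) :
    (∑' k, pmin q t i k * pmin q s k j) ≤ pmin q (t + s) i j := by
  have htend : Tendsto (fun m => ∑' k, pseq q m t i k * pmin q s k j) atTop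
      (𝓝 (∑' k, pmin q t i k * pmin q s k j)) := by
    refine tendsto_tsum_of_dominated_convergence (pmin_row_summable hq t i)
      (fun k => (pseq_tendsto_pmin hq t i k).mul_const _) ?_
    filter_upwards with m k
    rw [Real.norm_eq_abs, abs_of_nonneg (mul_nonneg (pseq_nonneg hq m t i k)
      (pmin_nonneg hq s k j))]
    calc pseq q m t i k * pmin q s k j ≤ pseq q m t i k * 1 :=
          mul_le_mul_of_nonneg_left (pmin_le_one hq s k j) (pseq_nonneg hq m t i k)
      _ = pseq q m t i k := mul_one _
      _ ≤ pmin q t i k := pseq_le_pmin hq m t i k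
  exact le_of_tendsto htend (Filter.Eventually.of_forall fun m => ck_aux1 hq hs j m i t ht)

lemma ck_aux2 (hq : IsQMatrix q) {s : ℝ} (hs : 0 ≤ s) (j : ℕ) :
    ∀ m, ∀ i, ∀ t : ℝ, 0 ≤ t →
      pseq q m (t + s) i j ≤ ∑' k, pmin q t i k * pmin q s k j := by
  have hc0 : ∀ k, 0 ≤ pmin q s k j := fun k => pmin_nonneg hq s k j
  have hc1 : ∀ k, pmin q s k j ≤ 1 := fun k => pmin_le_one hq s k j
  have hrecU : ∀ i, ∀ t : ℝ, 0 ≤ t → (∑' k, pmin q t i k * pmin q s k j) =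
      Real.exp (q i i * t) * pmin q s i j +
        IK (q i i) t (fun v => ∑' l, offDiag q i l * (∑' k, pmin q v l k * pmin q s k j)) := by
    intro i t ht
    exact sum_recursion hq (V := pmin q) (W := pmin q) (c := fun k => pmin q s k j) hc0 hc1
      (fun v l k => pmin_nonneg hq v l k) (fun v l F => pmin_row_sum hq v l F)
      (fun k => gf_pmin_measurable hq i k)
      (fun t' ht' k => (pmin_eq hq t' i k).trans (by rw [pt_eq ht'])) ht
  intro m
  induction m with
  | zero =>
    intro i t ht
    rw [pseq_zero, pt_eq (add_nonneg ht hs), hrecU i t ht]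
    have h1 : 0 ≤ IK (q i i) t
        (fun v => ∑' l, offDiag q i l * (∑' k, pmin q v l k * pmin q s k j)) :=
      IK_nonneg ht (fun v _ => tsum_nonneg fun l => mul_nonneg (offDiag_nonneg hq i l)
        (U_nonneg hq v l _ hc0))
    have h2 : (if i = j then (1:ℝ) else 0) * Real.exp (q i i * s) ≤ pmin q s i j := by
      have := pseq_le_pmin hq 0 s i j
      rwa [pseq_zero, pt_eq hs] at this
    have h3 : (if i = j then (1:ℝ) else 0) * Real.exp (q i i * (t + s)) =
        Real.exp (q i i * t) * ((if i = j then (1:ℝ) else 0) * Real.exp (q i i * s)) := by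
      rw [mul_add, Real.exp_add]; ring
    rw [h3]
    have h4 : Real.exp (q i i * t) * ((if i = j then (1:ℝ) else 0) * Real.exp (q i i * s)) ≤
        Real.exp (q i i * t) * pmin q s i j :=
      mul_le_mul_of_nonneg_left h2 (Real.exp_nonneg _)
    linarith
  | succ m ih =>
    intro i t ht
    rw [pseq_shift hq m ht hs i j, hrecU i t ht]
    refine add_le_add (mul_le_mul_of_nonneg_left (pseq_le_pmin hq (m+1) s i j)
      (Real.exp_nonneg _)) ?_
    refine IK_mono ht (fun v hv => ?_)
      (II_of_meas_bdd (C := -(q i i))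
        (((gf_pseq_continuous hq m i j).comp (continuous_const.add continuous_id)).measurable)
        (fun v => gf_nonneg hq (fun k => pseq_nonneg hq m (s + v) k j))
        (fun v => gf_le hq (fun k => pseq_nonneg hq m (s + v) k j)
          (fun k => pseq_le_one hq m (s + v) k j)) _ 0 t)
      (X_II_pmin hq i _ hc0 hc1 _ 0 t)
    unfold gf
    refine Summable.tsum_le_tsum (fun l => ?_) ?_ ?_
    · refine mul_le_mul_of_nonneg_left ?_ (offDiag_nonneg hq i l)
      have := ih l v hv.1
      rwa [add_comm v s] at this
    · refine Summable.of_nonneg_of_le (fun l => mul_nonneg (offDiag_nonneg hq i l)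
        (pseq_nonneg hq m (s + v) l j)) (fun l => ?_) (offDiag_summable hq i)
      calc offDiag q i l * pseq q m (s + v) l j ≤ offDiag q i l * 1 :=
            mul_le_mul_of_nonneg_left (pseq_le_one hq m (s + v) l j) (offDiag_nonneg hq i l)
        _ = offDiag q i l := mul_one _
    · refine Summable.of_nonneg_of_le (fun l => mul_nonneg (offDiag_nonneg hq i l)
        (U_nonneg hq v l _ hc0)) (fun l => ?_) (offDiag_summable hq i)
      calc offDiag q i l * (∑' k, pmin q v l k * pmin q s k j) ≤ offDiag q i l * 1 :=
            mul_le_mul_of_nonneg_left (U_le_one hq v l _ hc0 hc1) (offDiag_nonneg hq i l)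
        _ = offDiag q i l := mul_one _

lemma pmin_CK (hq : IsQMatrix q) {t s : ℝ} (ht : 0 ≤ t) (hs : 0 ≤ s) (i j : ℕ) :
    pmin q (t + s) i j = ∑' k, pmin q t i k * pmin q s k j :=
  le_antisymm (pmin_le_of_forall hq fun m => ck_aux2 hq hs j m i t ht)
    (ck_upper hq ht hs i j)

lemma pmin_transition (hq : IsQMatrix q) : IsTransitionFunction (pmin q) :=
  ⟨fun t i j ht => pmin_nonneg hq t i j,
   fun t i ht => pmin_row_summable hq t i,
   fun t i ht => pmin_row_tsum_le hq t i,
   fun i j => pmin_time_zero i j,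
   fun t s i j ht hs => pmin_CK hq ht hs i j⟩

end CK
section Sol
variable {q : ℕ → ℕ → ℝ} {P : ℝ → ℕ → ℕ → ℝ}

lemma sol_le_one (hP : IsTransitionFunction P) {t : ℝ} (ht : 0 ≤ t) (i j : ℕ) :
    P t i j ≤ 1 :=
  le_trans (Summable.le_tsum (hP.2.1 t i ht) j (fun k _ => hP.1 t i k ht)) (hP.2.2.1 t i ht)

lemma sol_exp_le_diag (hq : IsQMatrix q) (hP : IsTransitionFunction P)
    (hB : BackwardEq q P) {t : ℝ} (ht : 0 ≤ t) (i : ℕ) :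
    Real.exp (q i i * t) ≤ P t i i := by
  have h := hB t i i ht
  rw [if_pos rfl, one_mul] at h
  have hint : 0 ≤ ∫ s in (0:ℝ)..t,
      Real.exp (q i i * (t - s)) * (∑' k, if k = i then 0 else q i k * P s k i) := by
    refine intervalIntegral.integral_nonneg ht (fun s hs => ?_)
    refine mul_nonneg (Real.exp_nonneg _) (tsum_nonneg fun k => ?_)
    split
    · exact le_rfl
    · next hk => exact mul_nonneg (hq.1 i k (fun h' => hk h'.symm)) (hP.1 s k i hs.1)
  linarith

lemma sol_modulus (hq : IsQMatrix q) (hP : IsTransitionFunction P)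
    (hB : BackwardEq q P) (i j : ℕ) {t₁ t₂ : ℝ} (h1 : 0 ≤ t₁) (h12 : t₁ ≤ t₂) :
    |P t₂ i j - P t₁ i j| ≤ 1 - Real.exp (q i i * (t₂ - t₁)) := by
  set h := t₂ - t₁ with hh
  have hh0 : 0 ≤ h := by simp [hh]; linarith
  have hCK := hP.2.2.2.2 h t₁ i j hh0 h1
  have ht2 : h + t₁ = t₂ := by simp [hh]
  rw [ht2] at hCK
  have hrow : Summable (fun k => P h i k) := hP.2.1 h i hh0
  have hsum : Summable (fun k => P h i k * P t₁ k j) := by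
    refine Summable.of_nonneg_of_le (fun k => mul_nonneg (hP.1 h i k hh0) (hP.1 t₁ k j h1))
      (fun k => ?_) hrow
    calc P h i k * P t₁ k j ≤ P h i k * 1 :=
          mul_le_mul_of_nonneg_left (sol_le_one hP h1 k j) (hP.1 h i k hh0)
      _ = P h i k := mul_one _
  have hsplit := Summable.tsum_eq_add_tsum_ite hsum i
  have hrowsplit := Summable.tsum_eq_add_tsum_ite hrow i
  have hrowle := hP.2.2.1 h i hh0
  have hS2 : Summable (fun k => if k = i then 0 else P h i k) := by
    refine Summable.of_nonneg_of_le (fun k => ?_) (fun k => ?_) hrow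
    · split
      · exact le_rfl
      · exact hP.1 h i k hh0
    · split
      · exact hP.1 h i k hh0
      · exact le_rfl
  have hR'le : (∑' k, if k = i then 0 else P h i k) ≤ 1 - P h i i := by
    rw [hrowsplit] at hrowle
    linarith
  have hRnn : 0 ≤ ∑' k, if k = i then 0 else P h i k * P t₁ k j := by
    refine tsum_nonneg fun k => ?_
    split
    · exact le_rfl
    · exact mul_nonneg (hP.1 h i k hh0) (hP.1 t₁ k j h1)
  have hRle : (∑' k, if k = i then 0 else P h i k * P t₁ k j) ≤
      ∑' k, if k = i then 0 else P h i k := by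
    refine Summable.tsum_le_tsum (fun k => ?_) ?_ hS2
    · split
      · exact le_rfl
      · calc P h i k * P t₁ k j ≤ P h i k * 1 :=
              mul_le_mul_of_nonneg_left (sol_le_one hP h1 k j) (hP.1 h i k hh0)
          _ = P h i k := mul_one _
    · refine Summable.of_nonneg_of_le (fun k => ?_) (fun k => ?_) hS2
      · split
        · exact le_rfl
        · exact mul_nonneg (hP.1 h i k hh0) (hP.1 t₁ k j h1)
      · split
        · exact le_rfl
        · calc P h i k * P t₁ k j ≤ P h i k * 1 :=
                mul_le_mul_of_nonneg_left (sol_le_one hP h1 k j) (hP.1 h i k hh0)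
            _ = P h i k := mul_one _
  have hkey : P t₂ i j = P h i i * P t₁ i j +
      ∑' k, if k = i then 0 else P h i k * P t₁ k j := by rw [hCK, hsplit]
  have hexp := sol_exp_le_diag hq hP hB hh0 i
  have hP1 : P h i i ≤ 1 := sol_le_one hP hh0 i i
  have hQ0 : 0 ≤ P t₁ i j := hP.1 t₁ i j h1
  have hQ1 : P t₁ i j ≤ 1 := sol_le_one hP h1 i j
  rw [abs_le]
  constructor
  · nlinarith [mul_nonneg (sub_nonneg.mpr hP1) (sub_nonneg.mpr hQ1)]
  · nlinarith [mul_nonneg (sub_nonneg.mpr hP1) hQ0]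

lemma sol_cont (hq : IsQMatrix q) (hP : IsTransitionFunction P)
    (hB : BackwardEq q P) (i j : ℕ) : Continuous (fun u => P (pt u) i j) := by
  rw [Metric.continuous_iff]
  intro u ε hε
  have hcont0 : Tendsto (fun d : ℝ => 1 - Real.exp (q i i * d)) (𝓝 0) (𝓝 0) := by
    have h1 : Continuous (fun d : ℝ => 1 - Real.exp (q i i * d)) := by fun_prop
    have := h1.tendsto 0
    simpa using this
  obtain ⟨δ, hδ, hδ2⟩ := Metric.tendsto_nhds_nhds.mp hcont0 ε hε
  refine ⟨δ, hδ, fun u' hu' => ?_⟩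
  set d := |pt u' - pt u| with hd
  have hd0 : 0 ≤ d := abs_nonneg _
  have hdle : d ≤ |u' - u| := abs_max_sub_max_le_abs _ _ _
  have hdlt : d < δ := lt_of_le_of_lt hdle hu'
  have hmod : |P (pt u') i j - P (pt u) i j| ≤ 1 - Real.exp (q i i * d) := by
    rcases le_total (pt u) (pt u') with hc | hc
    · have := sol_modulus hq hP hB i j (pt_nonneg u) hc
      rwa [(by rw [hd, abs_of_nonneg (sub_nonneg.mpr hc)] : d = pt u' - pt u)]
    · have := sol_modulus hq hP hB i j (pt_nonneg u') hc
      rw [abs_sub_comm]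
      rwa [(by rw [hd, abs_sub_comm, abs_of_nonneg (sub_nonneg.mpr hc)] : d = pt u - pt u')]
  have hbd : dist d 0 < δ := by
    rw [Real.dist_eq, sub_zero, abs_of_nonneg hd0]
    exact hdlt
  have := hδ2 hbd
  rw [Real.dist_eq, sub_zero] at this
  have hnn : 0 ≤ 1 - Real.exp (q i i * d) := by
    have : Real.exp (q i i * d) ≤ 1 :=
      Real.exp_le_one_iff.mpr (mul_nonpos_of_nonpos_of_nonneg (diag_nonpos hq i) hd0)
    linarith
  rw [Real.dist_eq]
  calc |P (pt u') i j - P (pt u) i j| ≤ 1 - Real.exp (q i i * d) := hmod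
    _ ≤ |1 - Real.exp (q i i * d)| := le_abs_self _
    _ < ε := this

/-- The backward equation for a transition function, in `IK` form with the
time-truncated version of `P`. -/
lemma sol_eq_IK (hq : IsQMatrix q) (hP : IsTransitionFunction P)
    (hB : BackwardEq q P) {t : ℝ} (ht : 0 ≤ t) (i j : ℕ) :
    P t i j = (if i = j then 1 else 0) * Real.exp (q i i * t) +
      IK (q i i) t (gf q (fun u => P (pt u)) i j) := by
  rw [hB t i j ht, IK_eq]
  congr 1
  refine intervalIntegral.integral_congr fun s hs => ?_
  rw [Set.uIcc_of_le ht] at hs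
  have he : gf q (fun u => P (pt u)) i j s = ∑' k, if k = i then 0 else q i k * P s k j := by
    rw [← gf_eq_ite q (fun u => P (pt u)) i j s]
    refine tsum_congr fun k => ?_
    rw [pt_eq hs.1]
  rw [he]
lemma pseq_le_sol (hq : IsQMatrix q) (hP : IsTransitionFunction P) (hB : BackwardEq q P) :
    ∀ m, ∀ t : ℝ, 0 ≤ t → ∀ i j, pseq q m t i j ≤ P t i j := by
  have hPm0 : ∀ u k l, 0 ≤ P (pt u) k l := fun u k l => hP.1 (pt u) k l (pt_nonneg u)
  have hPm1 : ∀ u k l, P (pt u) k l ≤ 1 := fun u k l => sol_le_one hP (pt_nonneg u) k l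
  intro m
  induction m with
  | zero =>
    intro t ht i j
    rw [pseq_zero, pt_eq ht, sol_eq_IK hq hP hB ht i j]
    have h1 : 0 ≤ IK (q i i) t (gf q (fun u => P (pt u)) i j) :=
      IK_nonneg ht (fun s _ => gf_nonneg hq (fun k => hPm0 s k j))
    linarith
  | succ m ih =>
    intro t ht i j
    rw [pseq_succ, pt_eq ht, sol_eq_IK hq hP hB ht i j]
    refine add_le_add_right ?_ _
    refine IK_mono ht (fun s hs => ?_)
      (Continuous.intervalIntegrable (exp_mul_cont (gf_pseq_continuous hq m i j)) 0 t)
      (Continuous.intervalIntegrable (exp_mul_cont (gf_continuous hq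
        (fun k => sol_cont hq hP hB k j) (fun s k => hPm0 s k j)
        (fun s k => hPm1 s k j))) 0 t)
    refine gf_mono hq (fun k => pseq_nonneg hq m s k j) (fun k => ?_)
      (fun k => hPm0 s k j) (fun k => hPm1 s k j)
    have h2 := ih s hs.1 k j
    have h3 : P s k j = P (pt s) k j := by rw [pt_eq hs.1]
    exact h3 ▸ h2

lemma pmin_le_sol (hq : IsQMatrix q) (hP : IsTransitionFunction P) (hB : BackwardEq q P)
    {t : ℝ} (ht : 0 ≤ t) (i j : ℕ) : pmin q t i j ≤ P t i j :=
  pmin_le_of_forall hq fun m => pseq_le_sol hq hP hB m t ht i j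

lemma pmin_minimal (hq : IsQMatrix q) : IsMinimalQProcess q (pmin q) :=
  ⟨pmin_transition hq, pmin_backwardEq hq,
    fun P' hP' hB' t i j ht => pmin_le_sol hq hP' hB' ht i j⟩

lemma minimal_eq_pmin (hq : IsQMatrix q) (h : IsMinimalQProcess q P)
    {t : ℝ} (ht : 0 ≤ t) (i j : ℕ) : P t i j = pmin q t i j :=
  le_antisymm (h.2.2 (pmin q) (pmin_transition hq) (pmin_backwardEq hq) t i j ht)
    (pmin_le_sol hq h.1 h.2.1 ht i j)

end Sol

section Mixed
variable {q1 q2 : ℕ → ℕ → ℝ} {S : Set ℕ} {P : ℝ → ℕ → ℕ → ℝ}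

lemma gf_mixed_le (hq1 : IsQMatrix q1) (hq2 : IsQMatrix q2)
    (hagree : ∀ i ∈ S, ∀ k ∈ S, q1 i k = q2 i k) (hzero : ∀ i, i ∉ S → ∀ j, q1 i j = 0)
    {W : ℝ → ℕ → ℕ → ℝ} (hW0 : ∀ u k l, 0 ≤ W u k l) (hW1 : ∀ u k l, W u k l ≤ 1)
    {i j : ℕ} (hi : i ∈ S) (hj : j ∈ S) {m : ℕ} {s : ℝ}
    (hle : ∀ k ∈ S, pseq q1 m s k j ≤ W s k j) :
    gf q1 (pseq q1 m) i j s ≤ gf q2 W i j s := by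
  refine Summable.tsum_le_tsum (fun k => ?_)
    (gf_summable hq1 (fun k => pseq_nonneg hq1 m s k j) (fun k => pseq_le_one hq1 m s k j))
    (gf_summable hq2 (fun k => hW0 s k j) (fun k => hW1 s k j))
  by_cases hk : k ∈ S
  · have he : offDiag q1 i k = offDiag q2 i k := by
      unfold offDiag
      split
      · rfl
      · exact hagree i hi k hk
    rw [he]
    exact mul_le_mul_of_nonneg_left (hle k hk) (offDiag_nonneg hq2 i k)
  · have hz : pseq q1 m s k j = 0 := by
      rw [pseq_zero_row m (hzero k hk) s j, if_neg (fun h => hk (by rw [h]; exact hj))]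
    rw [hz, mul_zero]
    exact mul_nonneg (offDiag_nonneg hq2 i k) (hW0 s k j)

lemma pseq_le_sol_mixed (hq1 : IsQMatrix q1) (hq2 : IsQMatrix q2)
    (hagree : ∀ i ∈ S, ∀ k ∈ S, q1 i k = q2 i k) (hzero : ∀ i, i ∉ S → ∀ j, q1 i j = 0)
    (hP : IsTransitionFunction P) (hB : BackwardEq q2 P) :
    ∀ m, ∀ t : ℝ, 0 ≤ t → ∀ i ∈ S, ∀ j ∈ S, pseq q1 m t i j ≤ P t i j := by
  have hPm0 : ∀ u k l, 0 ≤ P (pt u) k l := fun u k l => hP.1 (pt u) k l (pt_nonneg u)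
  have hPm1 : ∀ u k l, P (pt u) k l ≤ 1 := fun u k l => sol_le_one hP (pt_nonneg u) k l
  intro m
  induction m with
  | zero =>
    intro t ht i hi j hj
    rw [pseq_zero, pt_eq ht, hagree i hi i hi, sol_eq_IK hq2 hP hB ht i j]
    have h1 : 0 ≤ IK (q2 i i) t (gf q2 (fun u => P (pt u)) i j) :=
      IK_nonneg ht (fun s _ => gf_nonneg hq2 (fun k => hPm0 s k j))
    linarith
  | succ m ih =>
    intro t ht i hi j hj
    rw [pseq_succ, pt_eq ht, hagree i hi i hi, sol_eq_IK hq2 hP hB ht i j]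
    refine add_le_add_right ?_ _
    refine IK_mono ht (fun s hs => ?_)
      (Continuous.intervalIntegrable (exp_mul_cont (gf_pseq_continuous hq1 m i j)) 0 t)
      (Continuous.intervalIntegrable (exp_mul_cont (gf_continuous hq2
        (fun k => sol_cont hq2 hP hB k j) (fun s k => hPm0 s k j)
        (fun s k => hPm1 s k j))) 0 t)
    refine gf_mixed_le hq1 hq2 hagree hzero hPm0 hPm1 hi hj (fun k hk => ?_)
    have h2 := ih s hs.1 k hk j hj
    have h3 : P s k j = P (pt s) k j := by rw [pt_eq hs.1]
    exact h3 ▸ h2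

lemma pseq_le_pseq_mixed (hq1 : IsQMatrix q1) (hq2 : IsQMatrix q2)
    (hagree : ∀ i ∈ S, ∀ k ∈ S, q1 i k = q2 i k) (hzero : ∀ i, i ∉ S → ∀ j, q1 i j = 0) :
    ∀ m, ∀ t : ℝ, 0 ≤ t → ∀ i ∈ S, ∀ j ∈ S, pseq q1 m t i j ≤ pseq q2 m t i j := by
  intro m
  induction m with
  | zero =>
    intro t ht i hi j hj
    rw [pseq_zero, pseq_zero, hagree i hi i hi]
  | succ m ih =>
    intro t ht i hi j hj
    rw [pseq_succ, pseq_succ, hagree i hi i hi, pt_eq ht]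
    refine add_le_add_right ?_ _
    refine IK_mono ht (fun s hs => ?_)
      (Continuous.intervalIntegrable (exp_mul_cont (gf_pseq_continuous hq1 m i j)) 0 t)
      (Continuous.intervalIntegrable (exp_mul_cont (gf_pseq_continuous hq2 m i j)) 0 t)
    exact gf_mixed_le hq1 hq2 hagree hzero (fun u k l => pseq_nonneg hq2 m u k l)
      (fun u k l => pseq_le_one hq2 m u k l) hi hj
      (fun k hk => ih s hs.1 k hk j hj)

lemma pmin_le_pmin_mixed (hq1 : IsQMatrix q1) (hq2 : IsQMatrix q2)
    (hagree : ∀ i ∈ S, ∀ k ∈ S, q1 i k = q2 i k) (hzero : ∀ i, i ∉ S → ∀ j, q1 i j = 0)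
    {t : ℝ} (ht : 0 ≤ t) {i j : ℕ} (hi : i ∈ S) (hj : j ∈ S) :
    pmin q1 t i j ≤ pmin q2 t i j :=
  pmin_le_of_forall hq1 fun m => le_trans
    (pseq_le_pseq_mixed hq1 hq2 hagree hzero m t ht i hi j hj) (pseq_le_pmin hq2 m t i j)

end Mixed
section Approx
open scoped Classical

variable {q : ℕ → ℕ → ℝ} {E : ℕ → Set ℕ} {qn : ℕ → ℕ → ℕ → ℝ}

lemma event_mem (hEmono : Monotone E) (hEunion : (⋃ n, E n) = Set.univ) (i : ℕ) :
    ∀ᶠ n in atTop, i ∈ E n := by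
  have h1 : i ∈ ⋃ n, E n := by rw [hEunion]; exact Set.mem_univ i
  obtain ⟨n₀, hn₀⟩ := Set.mem_iUnion.mp h1
  exact eventually_atTop.mpr ⟨n₀, fun n hn => hEmono hn hn₀⟩

lemma pseq_tendsto_n (hq : IsQMatrix q) (hEmono : Monotone E)
    (hEunion : (⋃ n, E n) = Set.univ) (hqnQ : ∀ n, IsQMatrix (qn n))
    (hqnE : ∀ n, ∀ i ∈ E n, ∀ j ∈ E n, qn n i j = q i j)
    (hqn0 : ∀ n, ∀ i, i ∉ E n → ∀ j, qn n i j = 0) :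
    ∀ m t i j, Tendsto (fun n => pseq (qn n) m t i j) atTop (𝓝 (pseq q m t i j)) := by
  intro m
  induction m with
  | zero =>
    intro t i j
    refine Tendsto.congr' ?_ tendsto_const_nhds
    filter_upwards [event_mem hEmono hEunion i] with n hi
    rw [pseq_zero, pseq_zero, hqnE n i hi i hi]
  | succ m ih =>
    intro t i j
    -- the modified integrand with indicator
    set gtil : ℕ → ℝ → ℝ := fun n s =>
      ∑' k, if k ∈ E n then offDiag q i k * pseq (qn n) m s k j else 0 with hgtil
    have hgeq : ∀ n, i ∈ E n → j ∈ E n → ∀ s,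
        gf (qn n) (pseq (qn n) m) i j s = gtil n s := by
      intro n hi hj s
      refine tsum_congr fun k => ?_
      by_cases hk : k ∈ E n
      · rw [if_pos hk]
        congr 1
        unfold offDiag
        split
        · rfl
        · exact hqnE n i hi k hk
      · rw [if_neg hk]
        have hz : pseq (qn n) m s k j = 0 := by
          rw [pseq_zero_row m (hqn0 n k hk) s j, if_neg (fun h => hk (by rw [h]; exact hj))]
        rw [hz, mul_zero]
    have hgtend : ∀ s, Tendsto (fun n => gtil n s) atTop (𝓝 (gf q (pseq q m) i j s)) := by
      intro s
      refine tendsto_tsum_of_dominated_convergence (offDiag_summable hq i) (fun k => ?_) ?_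
      · refine Tendsto.congr' ?_ ((ih s k j).const_mul (offDiag q i k))
        filter_upwards [event_mem hEmono hEunion k] with n hk
        rw [if_pos hk]
      · filter_upwards with n k
        split
        · rw [Real.norm_eq_abs, abs_mul, abs_of_nonneg (offDiag_nonneg hq i k),
            abs_of_nonneg (pseq_nonneg (hqnQ n) m s k j)]
          calc offDiag q i k * pseq (qn n) m s k j ≤ offDiag q i k * 1 :=
                mul_le_mul_of_nonneg_left (pseq_le_one (hqnQ n) m s k j)
                  (offDiag_nonneg hq i k)
            _ = offDiag q i k := mul_one _
        · simp [offDiag_nonneg hq i k]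
    -- convergence of the integrals
    have hint : Tendsto (fun n => ∫ s in (0:ℝ)..(pt t),
        Real.exp (-(q i i) * s) * gf (qn n) (pseq (qn n) m) i j s) atTop
        (𝓝 (∫ s in (0:ℝ)..(pt t), Real.exp (-(q i i) * s) * gf q (pseq q m) i j s)) := by
      refine intervalIntegral.tendsto_integral_filter_of_dominated_convergence
        (fun s => Real.exp (-(q i i) * s) * (-(q i i))) ?_ ?_ ?_ ?_
      · filter_upwards with n
        exact (exp_mul_cont (gf_pseq_continuous (hqnQ n) m i j)).aestronglyMeasurable
      · filter_upwards [event_mem hEmono hEunion i] with n hi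
        filter_upwards with s _
        rw [Real.norm_eq_abs, abs_mul, abs_of_nonneg (Real.exp_nonneg _),
          abs_of_nonneg (gf_nonneg (hqnQ n) (fun k => pseq_nonneg (hqnQ n) m s k j))]
        refine mul_le_mul_of_nonneg_left ?_ (Real.exp_nonneg _)
        have h1 := gf_le (hqnQ n) (i := i) (j := j) (s := s)
          (fun k => pseq_nonneg (hqnQ n) m s k j)
          (fun k => pseq_le_one (hqnQ n) m s k j)
        rwa [hqnE n i hi i hi] at h1
      · exact Continuous.intervalIntegrable (by fun_prop) 0 (pt t)
      · filter_upwards with s _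
        refine Tendsto.const_mul _ ?_
        refine Tendsto.congr' ?_ (hgtend s)
        filter_upwards [event_mem hEmono hEunion i, event_mem hEmono hEunion j] with n hi hj
        exact (hgeq n hi hj s).symm
    refine Tendsto.congr' ?_ (tendsto_const_nhds.add ((tendsto_const_nhds.mul hint)))
    filter_upwards [event_mem hEmono hEunion i] with n hi
    rw [pseq_succ, hqnE n i hi i hi]
    rfl

end Approx

end MinQ

/-- corrected form of Anderson's Proposition 2.2.14: for Q-matrices
`qn n` agreeing with `q` on `E n × E n` and having zero rows outside `E n`, the
minimal processes satisfy `Pn n t i j ≤ Pn (n+1) t i j` for `i, j ∈ E n`, and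
`Pn n t i j → P t i j` for all `i`, `j`, `t ≥ 0`. -/
theorem statement7 (q : ℕ → ℕ → ℝ) (hq : IsQMatrix q)
    (E : ℕ → Set ℕ) (hEmono : Monotone E) (hEunion : (⋃ n, E n) = Set.univ)
    (qn : ℕ → ℕ → ℕ → ℝ) (hqnQ : ∀ n, IsQMatrix (qn n))
    (hqnE : ∀ n, ∀ i ∈ E n, ∀ j ∈ E n, qn n i j = q i j)
    (hqn0 : ∀ n, ∀ i, i ∉ E n → ∀ j, qn n i j = 0)
    (Pn : ℕ → ℝ → ℕ → ℕ → ℝ) (P : ℝ → ℕ → ℕ → ℝ)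
    (hPn : ∀ n, IsMinimalQProcess (qn n) (Pn n))
    (hP : IsMinimalQProcess q P) :
    (∀ n, ∀ t : ℝ, 0 ≤ t → ∀ i ∈ E n, ∀ j ∈ E n, Pn n t i j ≤ Pn (n + 1) t i j) ∧
    (∀ t : ℝ, 0 ≤ t → ∀ i j : ℕ,
      Filter.Tendsto (fun n => Pn n t i j) Filter.atTop (nhds (P t i j))) := by
  constructor
  · intro n t ht i hi j hj
    have hagree : ∀ a ∈ E n, ∀ b ∈ E n, qn n a b = qn (n + 1) a b := by
      intro a ha b hb
      rw [hqnE n a ha b hb, hqnE (n + 1) a (hEmono (Nat.le_succ n) ha) b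
        (hEmono (Nat.le_succ n) hb)]
    rw [MinQ.minimal_eq_pmin (hqnQ n) (hPn n) ht i j,
      MinQ.minimal_eq_pmin (hqnQ (n + 1)) (hPn (n + 1)) ht i j]
    exact MinQ.pmin_le_pmin_mixed (hqnQ n) (hqnQ (n + 1)) hagree (hqn0 n) ht hi hj
  · intro t ht i j
    set L : ℕ → ℝ := fun n => Pn n t i j with hLdef
    have hLeq : ∀ n, L n = MinQ.pmin (qn n) t i j := fun n =>
      MinQ.minimal_eq_pmin (hqnQ n) (hPn n) ht i j
    have hL0 : ∀ n, 0 ≤ L n := fun n => (hPn n).1.1 t i j ht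
    have hL1 : ∀ n, L n ≤ 1 := fun n => MinQ.sol_le_one (hPn n).1 ht i j
    have hbdd : Filter.IsBoundedUnder (· ≤ ·) Filter.atTop L :=
      Filter.isBoundedUnder_of ⟨1, hL1⟩
    have hbdd' : Filter.IsBoundedUnder (· ≥ ·) Filter.atTop L :=
      Filter.isBoundedUnder_of ⟨0, hL0⟩
    have hPeq : P t i j = MinQ.pmin q t i j := MinQ.minimal_eq_pmin hq hP ht i j
    have hupper : ∀ᶠ n in Filter.atTop, L n ≤ P t i j := by
      filter_upwards [MinQ.event_mem hEmono hEunion i, MinQ.event_mem hEmono hEunion j]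
        with n hi' hj'
      rw [hLeq n]
      exact MinQ.pmin_le_of_forall (hqnQ n) fun m =>
        MinQ.pseq_le_sol_mixed (hqnQ n) hq (hqnE n) (hqn0 n) hP.1 hP.2.1 m t ht i hi' j hj'
    have hsup : Filter.limsup L Filter.atTop ≤ P t i j :=
      Filter.limsup_le_of_le hbdd'.isCoboundedUnder_le hupper
    have hinf : P t i j ≤ Filter.liminf L Filter.atTop := by
      rw [hPeq]
      refine MinQ.pmin_le_of_forall hq fun m => ?_
      have htd : Filter.Tendsto (fun n => MinQ.pseq (qn n) m t i j) Filter.atTop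
          (𝓝 (MinQ.pseq q m t i j)) :=
        MinQ.pseq_tendsto_n hq hEmono hEunion hqnQ hqnE hqn0 m t i j
      have hle : ∀ᶠ n in Filter.atTop, MinQ.pseq (qn n) m t i j ≤ L n :=
        Filter.Eventually.of_forall fun n => by
          rw [hLeq n]; exact MinQ.pseq_le_pmin (hqnQ n) m t i j
      calc MinQ.pseq q m t i j
          = Filter.liminf (fun n => MinQ.pseq (qn n) m t i j) Filter.atTop :=
            htd.liminf_eq.symm
        _ ≤ Filter.liminf L Filter.atTop :=
            Filter.liminf_le_liminf hle
              (Filter.isBoundedUnder_of ⟨0, fun n => MinQ.pseq_nonneg (hqnQ n) m t i j⟩)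
              hbdd.isCoboundedUnder_ge
    exact tendsto_of_le_liminf_of_limsup_le hinf hsup hbdd hbdd'
end
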